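/- arXiv:1207.1698 — 8 statements merged into one kernel-verified Lean document; each statement's English description precedes it below -/
import Mathlib

section
/- Let I ⊂ ℝ be an open interval, a, b ∈ I with a < b, f : I → ℝ a twice differentiable mapping such that f'' is integrable on [a,b], and suppose |f''| belongs to the Godunova-Levin class Q(I). Then |(1/(b−a))·∫ₐᵇ f(x) dx − (1/2)·( f((a+b)/2) + (f(a)+f(b))/2 )| ≤ ((b−a)²/4) · (ln(1/2) + 1) · (|f''(a)| + |f''(b)|). -/
open MeasureTheory Set Real

/-- A nonnegative function `g` belongs to the Godunova–Levin class `Q(I)` if for all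
`x, y ∈ I` and `l ∈ (0,1)` one has `g (l*x + (1-l)*y) ≤ g x / l + g y / (1-l)`. -/
def GodunovaLevin (I : Set ℝ) (g : ℝ → ℝ) : Prop :=
  (∀ x ∈ I, 0 ≤ g x) ∧
    ∀ x ∈ I, ∀ y ∈ I, ∀ l : ℝ, 0 < l → l < 1 →
      g (l * x + (1 - l) * y) ≤ g x / l + g y / (1 - l)

set_option maxHeartbeats 4000000 in
theorem godunova_levin_averaged_ineq
    (I : Set ℝ) (hI : IsOpen I) (hI' : I.OrdConnected)
    (a b : ℝ) (ha : a ∈ I) (hb : b ∈ I) (hab : a < b)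
    (f f' f'' : ℝ → ℝ)
    (hf' : ∀ x ∈ I, HasDerivAt f (f' x) x)
    (hf'' : ∀ x ∈ I, HasDerivAt f' (f'' x) x)
    (hint : IntervalIntegrable f'' volume a b)
    (hQ : GodunovaLevin I (fun x => |f'' x|)) :
    |(1 / (b - a)) * (∫ x in a..b, f x)
        - (1 / 2) * (f ((a + b) / 2) + (f a + f b) / 2)|
      ≤ ((b - a) ^ 2 / 4) * (Real.log (1 / 2) + 1) * (|f'' a| + |f'' b|) := by
  have hsub : Icc a b ⊆ I := hI'.out ha hb
  have hba : (0:ℝ) < b - a := by linarith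
  have hba' : (b:ℝ) - a ≠ 0 := ne_of_gt hba
  set m : ℝ := (a + b) / 2 with hmdef
  have ham : a < m := by rw [hmdef]; linarith
  have hmb : m < b := by rw [hmdef]; linarith
  set A : ℝ := |f'' a| with hA
  set B : ℝ := |f'' b| with hB
  have hA0 : 0 ≤ A := abs_nonneg _
  have hB0 : 0 ≤ B := abs_nonneg _
  -- continuity facts
  have hfc : ContinuousOn f (Icc a b) := fun x hx =>
    ((hf' x (hsub hx)).continuousAt).continuousWithinAt
  have hf'c : ContinuousOn f' (Icc a b) := fun x hx =>
    ((hf'' x (hsub hx)).continuousAt).continuousWithinAt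
  -- the integration by parts identity on a subinterval
  have parts : ∀ p q : ℝ, p < q → uIcc p q ⊆ Icc a b →
      IntervalIntegrable f'' volume p q →
      ∫ x in p..q, (x - p) * (x - q) / (2*(b - a)) * f'' x
        = (1/(b - a)) * (∫ x in p..q, f x) - (q - p) * (f p + f q) / (2*(b - a)) := by
    intro p q hpq hpqsub hintpq
    have hu : ∀ x ∈ uIcc p q, HasDerivAt (fun x => (x - p) * (x - q) / (2*(b - a)))
        ((2*x - p - q) / (2*(b - a))) x := by
      intro x _
      have h1 := (((hasDerivAt_id x).sub_const p).mul
        ((hasDerivAt_id x).sub_const q)).div_const (2*(b - a))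
      simp only [id_eq, one_mul, mul_one] at h1
      refine h1.congr_deriv ?_
      ring
    have hu' : ∀ x ∈ uIcc p q, HasDerivAt (fun x => (2*x - p - q) / (2*(b - a)))
        (1/(b - a)) x := by
      intro x _
      have h1 := ((((hasDerivAt_id x).const_mul 2).sub_const p).sub_const q).div_const
        (2*(b - a))
      simp only [id_eq, mul_one] at h1
      refine h1.congr_deriv ?_
      field_simp
    have hv' : ∀ x ∈ uIcc p q, HasDerivAt f' (f'' x) x := fun x hx =>
      hf'' x (hsub (hpqsub hx))
    have hv : ∀ x ∈ uIcc p q, HasDerivAt f (f' x) x := fun x hx =>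
      hf' x (hsub (hpqsub hx))
    have hu'int : IntervalIntegrable (fun x => (2*x - p - q)/(2*(b - a))) volume p q :=
      (Continuous.continuousOn (by fun_prop)).intervalIntegrable
    have hf'int : IntervalIntegrable f' volume p q :=
      (hf'c.mono hpqsub).intervalIntegrable
    have hfint : IntervalIntegrable f volume p q :=
      (hfc.mono hpqsub).intervalIntegrable
    have ibp1 := intervalIntegral.integral_mul_deriv_eq_deriv_mul hu hv' hu'int hintpq
    have ibp2 := intervalIntegral.integral_mul_deriv_eq_deriv_mul hu' hv
      ((continuous_const).continuousOn.intervalIntegrable) hf'int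
    rw [ibp1, ibp2, intervalIntegral.integral_const_mul]
    have e1 : (q - p) * (q - q) / (2*(b - a)) = 0 := by ring
    have e2 : (p - p) * (p - q) / (2*(b - a)) = 0 := by ring
    rw [e1, e2]
    ring
  -- integrability on subintervals
  have hsub1 : uIcc a m ⊆ Icc a b := by
    rw [uIcc_of_le ham.le]; exact Icc_subset_Icc le_rfl hmb.le
  have hsub2 : uIcc m b ⊆ Icc a b := by
    rw [uIcc_of_le hmb.le]; exact Icc_subset_Icc ham.le le_rfl
  have hint1 : IntervalIntegrable f'' volume a m :=
    hint.mono_set (by rw [uIcc_of_le hab.le]; exact hsub1)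
  have hint2 : IntervalIntegrable f'' volume m b :=
    hint.mono_set (by rw [uIcc_of_le hab.le]; exact hsub2)
  have P1 := parts a m ham hsub1 hint1
  have P2 := parts m b hmb hsub2 hint2
  -- combine : key identity
  have hfint1 : IntervalIntegrable f volume a m := (hfc.mono hsub1).intervalIntegrable
  have hfint2 : IntervalIntegrable f volume m b := (hfc.mono hsub2).intervalIntegrable
  have hsplit : (∫ x in a..m, f x) + (∫ x in m..b, f x) = ∫ x in a..b, f x :=
    intervalIntegral.integral_add_adjacent_intervals hfint1 hfint2
  have key : (1 / (b - a)) * (∫ x in a..b, f x) - (1 / 2) * (f m + (f a + f b) / 2)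
      = (∫ x in a..m, (x - a) * (x - m) / (2*(b - a)) * f'' x)
        + (∫ x in m..b, (x - m) * (x - b) / (2*(b - a)) * f'' x) := by
    rw [P1, P2, ← hsplit]
    have hma : m - a = (b - a) / 2 := by rw [hmdef]; ring
    have hbm : b - m = (b - a) / 2 := by rw [hmdef]; ring
    rw [hma, hbm]
    field_simp
    ring
  -- pointwise Godunova-Levin bound
  have hQbound : ∀ x ∈ Ioo a b, |f'' x| ≤ A * (b - a) / (b - x) + B * (b - a) / (x - a) := by
    intro x hx
    obtain ⟨hax, hxb⟩ := hx
    set l : ℝ := (b - x) / (b - a) with hl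
    have hl0 : 0 < l := div_pos (by linarith) hba
    have hl1 : l < 1 := by
      rw [hl, div_lt_one hba]; linarith
    have hxl : l * a + (1 - l) * b = x := by
      rw [hl]; field_simp; ring
    have hmain := hQ.2 a ha b hb l hl0 hl1
    rw [hxl] at hmain
    have h1l : 1 - l = (x - a) / (b - a) := by rw [hl]; field_simp; ring
    calc |f'' x| ≤ |f'' a| / l + |f'' b| / (1 - l) := hmain
      _ = A * (b - a) / (b - x) + B * (b - a) / (x - a) := by
          rw [h1l, hl, ← hA, ← hB, div_div_eq_mul_div, div_div_eq_mul_div]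
  -- pointwise bounds on each half
  have bound1 : ∀ x ∈ Icc a m, |(x - a) * (x - m) / (2*(b - a)) * f'' x|
      ≤ A * ((x - a) * (a + b - 2*x) / (4 * (b - x))) + B * ((a + b - 2*x) / 4) := by
    intro x hx
    obtain ⟨hax, hxm⟩ := hx
    have hxm' : 2 * x ≤ a + b := by rw [hmdef] at hxm; linarith
    rcases eq_or_lt_of_le hax with rfl | hax'
    · have h0 : (a - a) * (a - m) / (2*(b - a)) * f'' a = 0 := by ring
      rw [h0, abs_zero]
      have e1 : A * ((a - a) * (a + b - 2*a) / (4 * (b - a))) = 0 := by ring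
      rw [e1, zero_add]
      exact mul_nonneg hB0 (by linarith)
    · have hxb : x < b := lt_of_le_of_lt hxm hmb
      have hb' : 0 < b - x := by linarith
      have ha' : 0 < x - a := by linarith
      have hK : |(x - a) * (x - m) / (2*(b - a))| = (x - a) * (a + b - 2*x) / (4*(b - a)) := by
        rw [abs_div, abs_of_pos (by linarith : (0:ℝ) < 2*(b - a)),
          abs_mul, abs_of_pos ha', abs_of_nonpos (by rw [hmdef]; linarith : x - m ≤ 0)]
        rw [show -(x - m) = (a + b - 2*x)/2 by rw [hmdef]; ring,
          div_eq_div_iff (by positivity : (2:ℝ)*(b - a) ≠ 0) (by positivity : (4:ℝ)*(b - a) ≠ 0)]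
        ring
      rw [abs_mul, hK]
      have hf''b := hQbound x ⟨hax', hxb⟩
      have hnn : 0 ≤ (x - a) * (a + b - 2*x) / (4*(b - a)) := by
        apply div_nonneg _ (by linarith)
        exact mul_nonneg (by linarith) (by linarith)
      calc (x - a) * (a + b - 2*x) / (4*(b - a)) * |f'' x|
          ≤ (x - a) * (a + b - 2*x) / (4*(b - a))
            * (A * (b - a) / (b - x) + B * (b - a) / (x - a)) :=
            mul_le_mul_of_nonneg_left hf''b hnn
        _ = A * ((x - a) * (a + b - 2*x) / (4 * (b - x))) + B * ((a + b - 2*x) / 4) := by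
            field_simp
  have bound2 : ∀ x ∈ Icc m b, |(x - m) * (x - b) / (2*(b - a)) * f'' x|
      ≤ A * ((2*x - a - b) / 4) + B * ((b - x) * (2*x - a - b) / (4 * (x - a))) := by
    intro x hx
    obtain ⟨hmx, hxb⟩ := hx
    have hmx' : a + b ≤ 2 * x := by rw [hmdef] at hmx; linarith
    rcases eq_or_lt_of_le hxb with rfl | hxb'
    · have h0 : (x - m) * (x - x) / (2*(x - a)) * f'' x = 0 := by ring
      rw [h0, abs_zero]
      have e1 : B * ((x - x) * (2*x - a - x) / (4 * (x - a))) = 0 := by ring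
      rw [e1, add_zero]
      exact mul_nonneg hA0 (by linarith)
    · have hax : a < x := lt_of_lt_of_le ham hmx
      have hb' : 0 < b - x := by linarith
      have ha' : 0 < x - a := by linarith
      have hK : |(x - m) * (x - b) / (2*(b - a))| = (b - x) * (2*x - a - b) / (4*(b - a)) := by
        rw [abs_div, abs_of_pos (by linarith : (0:ℝ) < 2*(b - a)),
          abs_mul, abs_of_nonneg (by rw [hmdef]; linarith : (0:ℝ) ≤ x - m),
          abs_of_nonpos (by linarith : x - b ≤ 0)]
        rw [show x - m = (2*x - a - b)/2 by rw [hmdef]; ring,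
          div_eq_div_iff (by positivity : (2:ℝ)*(b - a) ≠ 0) (by positivity : (4:ℝ)*(b - a) ≠ 0)]
        ring
      rw [abs_mul, hK]
      have hf''b := hQbound x ⟨hax, hxb'⟩
      have hnn : 0 ≤ (b - x) * (2*x - a - b) / (4*(b - a)) := by
        apply div_nonneg _ (by linarith)
        exact mul_nonneg (by linarith) (by linarith)
      calc (b - x) * (2*x - a - b) / (4*(b - a)) * |f'' x|
          ≤ (b - x) * (2*x - a - b) / (4*(b - a))
            * (A * (b - a) / (b - x) + B * (b - a) / (x - a)) :=
            mul_le_mul_of_nonneg_left hf''b hnn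
        _ = A * ((2*x - a - b) / 4) + B * ((b - x) * (2*x - a - b) / (4 * (x - a))) := by
            field_simp
  -- integrability of the pieces
  have hKint1 : IntervalIntegrable (fun x => (x - a) * (x - m) / (2*(b - a)) * f'' x)
      volume a m :=
    hint1.continuousOn_mul (Continuous.continuousOn (by fun_prop))
  have hKint2 : IntervalIntegrable (fun x => (x - m) * (x - b) / (2*(b - a)) * f'' x)
      volume m b :=
    hint2.continuousOn_mul (Continuous.continuousOn (by fun_prop))
  -- the majorant functions are continuous, hence integrable
  have hg1cont : ContinuousOn
      (fun x => A * ((x - a) * (a + b - 2*x) / (4 * (b - x))) + B * ((a + b - 2*x) / 4))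
      (uIcc a m) := by
    rw [uIcc_of_le ham.le]
    apply ContinuousOn.add
    · apply ContinuousOn.mul continuousOn_const
      apply ContinuousOn.div
      · exact Continuous.continuousOn (by fun_prop)
      · exact Continuous.continuousOn (by fun_prop)
      · intro x hx
        have hxb : x < b := lt_of_le_of_lt hx.2 hmb
        have : 0 < b - x := by linarith
        positivity
    · exact Continuous.continuousOn (by fun_prop)
  have hg2cont : ContinuousOn
      (fun x => A * ((2*x - a - b) / 4) + B * ((b - x) * (2*x - a - b) / (4 * (x - a))))
      (uIcc m b) := by
    rw [uIcc_of_le hmb.le]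
    apply ContinuousOn.add
    · exact Continuous.continuousOn (by fun_prop)
    · apply ContinuousOn.mul continuousOn_const
      apply ContinuousOn.div
      · exact Continuous.continuousOn (by fun_prop)
      · exact Continuous.continuousOn (by fun_prop)
      · intro x hx
        have hax : a < x := lt_of_lt_of_le ham hx.1
        have : 0 < x - a := by linarith
        positivity
  have hg1int : IntervalIntegrable
      (fun x => A * ((x - a) * (a + b - 2*x) / (4 * (b - x))) + B * ((a + b - 2*x) / 4))
      volume a m := hg1cont.intervalIntegrable
  have hg2int : IntervalIntegrable
      (fun x => A * ((2*x - a - b) / 4) + B * ((b - x) * (2*x - a - b) / (4 * (x - a))))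
      volume m b := hg2cont.intervalIntegrable
  -- compare integrals
  have mono1 : ∫ x in a..m, |(x - a) * (x - m) / (2*(b - a)) * f'' x|
      ≤ ∫ x in a..m,
        (A * ((x - a) * (a + b - 2*x) / (4 * (b - x))) + B * ((a + b - 2*x) / 4)) :=
    intervalIntegral.integral_mono_on ham.le hKint1.abs hg1int bound1
  have mono2 : ∫ x in m..b, |(x - m) * (x - b) / (2*(b - a)) * f'' x|
      ≤ ∫ x in m..b,
        (A * ((2*x - a - b) / 4) + B * ((b - x) * (2*x - a - b) / (4 * (x - a)))) :=
    intervalIntegral.integral_mono_on hmb.le hKint2.abs hg2int bound2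
  -- compute the majorant integrals via explicit antiderivatives
  have calc1 : ∫ x in a..m,
      (A * ((x - a) * (a + b - 2*x) / (4 * (b - x))) + B * ((a + b - 2*x) / 4))
      = A * ((b - a)^2 * (3 - 4 * Real.log 2) / 16) + B * ((b - a)^2 / 16) := by
    have hderiv : ∀ x ∈ uIcc a m, HasDerivAt
        (fun x => A * (-(3*(b - a)/4)*(b-x) + ((b - a)^2/4) * Real.log (b-x) + (b-x)^2/4)
          + B * (-(a + b - 2*x)^2/16))
        (A * ((x - a) * (a + b - 2*x) / (4 * (b - x))) + B * ((a + b - 2*x) / 4)) x := by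
      intro x hx
      rw [uIcc_of_le ham.le] at hx
      have hbx : 0 < b - x := by
        have := hx.2; rw [hmdef] at this; linarith
      have hbd : HasDerivAt (fun x : ℝ => b - x) (-1) x := by
        simpa using (hasDerivAt_id x).const_sub b
      have hlog : HasDerivAt (fun x => Real.log (b - x)) (-(1/(b-x))) x := by
        have := (Real.hasDerivAt_log hbx.ne').comp x hbd
        refine this.congr_deriv ?_; field_simp
      have h1 : HasDerivAt (fun x : ℝ => -(3*(b - a)/4)*(b-x)) (3*(b - a)/4) x := by
        have := hbd.const_mul (-(3*(b - a)/4))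
        refine this.congr_deriv ?_; ring
      have h2 : HasDerivAt (fun x : ℝ => ((b - a)^2/4) * Real.log (b-x))
          (((b - a)^2/4) * (-(1/(b-x)))) x := hlog.const_mul _
      have h3 : HasDerivAt (fun x : ℝ => (b-x)^2/4) (2*(b-x)*(-1)/4) x := by
        have := (hbd.pow 2).div_const 4
        refine this.congr_deriv ?_; push_cast; ring
      have habd : HasDerivAt (fun x : ℝ => a + b - 2*x) (-2) x := by
        simpa using ((hasDerivAt_id x).const_mul 2).const_sub (a + b)
      have h4 : HasDerivAt (fun x : ℝ => -(a + b - 2*x)^2/16)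
          (-(2*(a + b - 2*x)*(-2))/16) x := by
        have := ((habd.pow 2).neg).div_const 16
        refine this.congr_deriv ?_; push_cast; ring
      have hAll := (((h1.add h2).add h3).const_mul A).add (h4.const_mul B)
      refine hAll.congr_deriv ?_
      have e : (x - a) * (a + b - 2*x) / (4 * (b - x))
          = 3*(b - a)/4 + ((b - a)^2/4) * (-(1/(b-x))) + 2*(b-x)*(-1)/4 := by
        field_simp
        ring
      have e2 : (a + b - 2*x)/4 = -(2*(a + b - 2*x)*(-2))/16 := by ring
      rw [e, e2]
    rw [intervalIntegral.integral_eq_sub_of_hasDerivAt hderiv hg1int]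
    rw [hmdef]
    rw [show b - (a + b)/2 = (b - a)/2 by ring,
      show a + b - 2*((a + b)/2) = 0 by ring,
      Real.log_div hba' two_ne_zero]
    ring
  have calc2 : ∫ x in m..b,
      (A * ((2*x - a - b) / 4) + B * ((b - x) * (2*x - a - b) / (4 * (x - a))))
      = A * ((b - a)^2 / 16) + B * ((b - a)^2 * (3 - 4 * Real.log 2) / 16) := by
    have hderiv : ∀ x ∈ uIcc m b, HasDerivAt
        (fun x => A * ((2*x - a - b)^2/16)
          + B * ((3*(b - a)/4)*(x-a) - ((b - a)^2/4) * Real.log (x-a) - (x-a)^2/4))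
        (A * ((2*x - a - b) / 4) + B * ((b - x) * (2*x - a - b) / (4 * (x - a)))) x := by
      intro x hx
      rw [uIcc_of_le hmb.le] at hx
      have hxa : 0 < x - a := by
        have := hx.1; rw [hmdef] at this; linarith
      have hxad : HasDerivAt (fun x : ℝ => x - a) 1 x := (hasDerivAt_id x).sub_const a
      have hlog : HasDerivAt (fun x => Real.log (x - a)) (1/(x-a)) x := by
        have := (Real.hasDerivAt_log hxa.ne').comp x hxad
        refine this.congr_deriv ?_; field_simp
      have habd : HasDerivAt (fun x : ℝ => 2*x - a - b) 2 x := by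
        simpa using (((hasDerivAt_id x).const_mul 2).sub_const a).sub_const b
      have h1 : HasDerivAt (fun x : ℝ => (2*x - a - b)^2/16) (2*(2*x - a - b)*2/16) x := by
        have := (habd.pow 2).div_const 16
        refine this.congr_deriv ?_; push_cast; ring
      have h2 : HasDerivAt (fun x : ℝ => (3*(b - a)/4)*(x-a)) (3*(b - a)/4) x := by
        have := hxad.const_mul (3*(b - a)/4)
        refine this.congr_deriv ?_; ring
      have h3 : HasDerivAt (fun x : ℝ => ((b - a)^2/4) * Real.log (x-a))
          (((b - a)^2/4) * (1/(x-a))) x := hlog.const_mul _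
      have h4 : HasDerivAt (fun x : ℝ => (x-a)^2/4) (2*(x-a)*1/4) x := by
        have := (hxad.pow 2).div_const 4
        refine this.congr_deriv ?_; push_cast; ring
      have hAll := (h1.const_mul A).add (((h2.sub h3).sub h4).const_mul B)
      refine hAll.congr_deriv ?_
      have e1 : (2*x - a - b)/4 = 2*(2*x - a - b)*2/16 := by ring
      have e2 : (b - x) * (2*x - a - b) / (4 * (x - a))
          = 3*(b - a)/4 - ((b - a)^2/4) * (1/(x-a)) - 2*(x-a)*1/4 := by
        field_simp
        ring
      rw [e1, e2]
    rw [intervalIntegral.integral_eq_sub_of_hasDerivAt hderiv hg2int]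
    rw [hmdef]
    rw [show 2*((a + b)/2) - a - b = 0 by ring,
      show (a + b)/2 - a = (b - a)/2 by ring,
      Real.log_div hba' two_ne_zero]
    ring
  -- put everything together
  have hlhalf : Real.log (1/2 : ℝ) = - Real.log 2 := by
    rw [show (1/2 : ℝ) = 2⁻¹ by norm_num, Real.log_inv]
  rw [key, hlhalf]
  have step1 := abs_add_le (∫ x in a..m, (x - a) * (x - m) / (2*(b - a)) * f'' x)
    (∫ x in m..b, (x - m) * (x - b) / (2*(b - a)) * f'' x)
  have step2 : |∫ x in a..m, (x - a) * (x - m) / (2*(b - a)) * f'' x|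
      ≤ ∫ x in a..m, |(x - a) * (x - m) / (2*(b - a)) * f'' x| :=
    intervalIntegral.abs_integral_le_integral_abs ham.le
  have step3 : |∫ x in m..b, (x - m) * (x - b) / (2*(b - a)) * f'' x|
      ≤ ∫ x in m..b, |(x - m) * (x - b) / (2*(b - a)) * f'' x| :=
    intervalIntegral.abs_integral_le_integral_abs hmb.le
  calc |(∫ x in a..m, (x - a) * (x - m) / (2*(b - a)) * f'' x)
      + (∫ x in m..b, (x - m) * (x - b) / (2*(b - a)) * f'' x)|
      ≤ (∫ x in a..m, |(x - a) * (x - m) / (2*(b - a)) * f'' x|)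
        + ∫ x in m..b, |(x - m) * (x - b) / (2*(b - a)) * f'' x| :=
        le_trans step1 (add_le_add step2 step3)
    _ ≤ (∫ x in a..m,
          (A * ((x - a) * (a + b - 2*x) / (4 * (b - x))) + B * ((a + b - 2*x) / 4)))
        + ∫ x in m..b,
          (A * ((2*x - a - b) / 4) + B * ((b - x) * (2*x - a - b) / (4 * (x - a)))) :=
        add_le_add mono1 mono2
    _ = (b - a)^2 / 4 * (-Real.log 2 + 1) * (A + B) := by
        rw [calc1, calc2]; ring
end

section
/- Let I ⊂ ℝ be an open interval, a, b ∈ I with a < b, f : I → ℝ a twice differentiable mapping such that f'' is integrable on [a,b], let q ≥ 1, and suppose |f''|^q belongs to the Godunova-Levin class Q(I). Then |(1/(b−a))·∫ₐᵇ f(x) dx − f((a+b)/2)| ≤ ((b−a)²/2) · (1/24)^(1 − 1/q) · { ( (1/8)·|f''(a)|^q + (ln 2 − 5/8)·|f''(b)|^q )^(1/q) + ( (ln 2 − 5/8)·|f''(a)|^q + (1/8)·|f''(b)|^q )^(1/q) }. -/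
open MeasureTheory Set Real

section GLAux
open intervalIntegral

lemma integral_sq_div :
    ∀ (a b : ℝ), a < b → ∫ x in a..(a+b)/2, (x-a)^2/(b-x) = (b-a)^2 * (Real.log 2 - 5/8) := by
  intro a b hab
  have hc : (0:ℝ) < b - a := by linarith
  have hsub : ∀ x ∈ uIcc a ((a+b)/2), HasDerivAt
      (fun x => -(b-a)^2 * Real.log (b-x) - 2*(b-a)*x - (b-x)^2/2) ((x-a)^2/(b-x)) x := by
    intro x hx
    rw [uIcc_of_le (by linarith)] at hx
    have hbx : (0:ℝ) < b - x := by linarith [hx.2]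
    have h1 : HasDerivAt (fun x : ℝ => b - x) (-1) x := by
      simpa using (hasDerivAt_id x).const_sub b
    have h2 : HasDerivAt (fun x : ℝ => Real.log (b-x)) ((b-x)⁻¹ * (-1)) x :=
      (Real.hasDerivAt_log hbx.ne').comp x h1
    have h3 : HasDerivAt (fun x : ℝ => (b-x)^2/2) ((2:ℕ) * (b-x)^1 * (-1) / 2) x :=
      (h1.pow 2).div_const 2
    have := (((h2.const_mul (-(b-a)^2)).sub ((hasDerivAt_id x).const_mul (2*(b-a)))).sub h3)
    refine this.congr_deriv ?_
    field_simp
    ring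
  have := intervalIntegral.integral_eq_sub_of_hasDerivAt hsub ?_
  · rw [this]
    have h1 : b - (a+b)/2 = (b-a)/2 := by ring
    rw [h1, Real.log_div hc.ne' two_ne_zero]
    ring
  · apply ContinuousOn.intervalIntegrable
    apply ContinuousOn.div
    · fun_prop
    · fun_prop
    · intro x hx
      rw [uIcc_of_le (by linarith)] at hx
      intro h; have := hx.2; linarith

lemma integral_lin (a b : ℝ) (hab : a < b) :
    ∫ x in a..(a+b)/2, (x-a) = (b-a)^2/8 := by
  have hsub : ∀ x ∈ uIcc a ((a+b)/2), HasDerivAt (fun x => (x-a)^2/2) (x-a) x := by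
    intro x _
    have h1 : HasDerivAt (fun x : ℝ => x - a) 1 x := (hasDerivAt_id x).sub_const a
    have := (h1.pow 2).div_const 2
    refine this.congr_deriv ?_
    push_cast; ring
  rw [intervalIntegral.integral_eq_sub_of_hasDerivAt hsub
    (by apply ContinuousOn.intervalIntegrable; fun_prop)]
  ring

lemma integral_sq (a b : ℝ) (hab : a < b) :
    ∫ x in a..(a+b)/2, (x-a)^2/2 = (b-a)^3/48 := by
  have hsub : ∀ x ∈ uIcc a ((a+b)/2), HasDerivAt (fun x => (x-a)^3/6) ((x-a)^2/2) x := by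
    intro x _
    have h1 : HasDerivAt (fun x : ℝ => x - a) 1 x := (hasDerivAt_id x).sub_const a
    have := (h1.pow 3).div_const 6
    refine this.congr_deriv ?_
    push_cast; ring
  rw [intervalIntegral.integral_eq_sub_of_hasDerivAt hsub
    (by apply ContinuousOn.intervalIntegrable; fun_prop)]
  ring


set_option maxHeartbeats 1000000 in
lemma half_estimate (a b : ℝ) (hab : a < b) (g : ℝ → ℝ)
    (hg : AEStronglyMeasurable g (volume.restrict (Ioc a ((a+b)/2))))
    (q : ℝ) (hq : 1 ≤ q) (A B : ℝ) (hA : 0 ≤ A) (hB : 0 ≤ B)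
    (hbound : ∀ x ∈ Ioc a ((a+b)/2),
       |g x| ^ q ≤ A * (b-a)/(b-x) + B * (b-a)/(x-a)) :
    ∫ x in a..(a+b)/2, (x-a)^2/2 * |g x|
      ≤ ((b-a)^3/48) ^ (1-1/q) * ((b-a)^3/2 * ((Real.log 2 - 5/8)*A + B/8)) ^ (1/q) := by
  set m : ℝ := (a+b)/2 with hm
  have hc : (0:ℝ) < b - a := by linarith
  have ham : a < m := by rw [hm]; linarith
  have hmb : m < b := by rw [hm]; linarith
  have hq0 : (0:ℝ) < q := by linarith
  have hlog : (0:ℝ) < Real.log 2 - 5/8 := by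
    have := Real.log_two_gt_d9; linarith
  set S : ℝ := (Real.log 2 - 5/8)*A + B/8 with hS
  have hSnn : 0 ≤ S := by positivity
  set h : ℝ → ℝ := fun x => A*(b-a)/2 * ((x-a)^2/(b-x)) + B*(b-a)/2 * (x-a) with hh
  -- integral of h
  have h_cont : ContinuousOn h (Icc a m) := by
    apply ContinuousOn.add
    · apply ContinuousOn.mul continuousOn_const
      apply ContinuousOn.div (by fun_prop) (by fun_prop)
      intro x hx; intro hx0; have := hx.2; simp only [hm] at this; nlinarith
    · fun_prop
  have h_int : IntegrableOn h (Ioc a m) :=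
    (h_cont.integrableOn_Icc).mono_set Ioc_subset_Icc_self
  have hIh : ∫ x in Ioc a m, h x = (b-a)^3/2 * S := by
    rw [← intervalIntegral.integral_of_le ham.le]
    have i1 : IntervalIntegrable (fun x => (x-a)^2/(b-x)) volume a m := by
      apply ContinuousOn.intervalIntegrable
      rw [uIcc_of_le ham.le]
      apply ContinuousOn.div (by fun_prop) (by fun_prop)
      intro x hx; intro hx0; have := hx.2; simp only [hm] at this; nlinarith
    have i2 : IntervalIntegrable (fun x => x-a) volume a m := by
      apply ContinuousOn.intervalIntegrable; fun_prop
    rw [hh]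
    rw [intervalIntegral.integral_add ((i1.const_mul _)) ((i2.const_mul _)),
      intervalIntegral.integral_const_mul, intervalIntegral.integral_const_mul,
      integral_sq_div a b hab, integral_lin a b hab]
    rw [hS]; ring
  -- pointwise bound
  have hptle : ∀ x ∈ Ioc a m, (x-a)^2/2 * |g x|^q ≤ h x := by
    intro x hx
    have hxa : a < x := hx.1
    have hxm : x ≤ m := hx.2
    have hxb : x < b := lt_of_le_of_lt hxm hmb
    calc (x-a)^2/2 * |g x|^q ≤ (x-a)^2/2 * (A * (b-a)/(b-x) + B * (b-a)/(x-a)) := by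
          apply mul_le_mul_of_nonneg_left (hbound x hx) (by positivity)
      _ ≤ h x := by
          rw [hh]
          have hne1 : x - a ≠ 0 := sub_ne_zero.mpr hxa.ne'
          have hne2 : b - x ≠ 0 := sub_ne_zero.mpr hxb.ne'
          have h1 : (x-a)^2/2 * (B * (b-a)/(x-a)) = B*(b-a)/2 * (x-a) := by
            field_simp
          have h2 : (x-a)^2/2 * (A * (b-a)/(b-x)) = A*(b-a)/2 * ((x-a)^2/(b-x)) := by
            field_simp
          rw [mul_add, h1, h2]
  -- measurability of p * |g|^q
  have habs : AEStronglyMeasurable (fun x => |g x|) (volume.restrict (Ioc a m)) := by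
    simpa [Real.norm_eq_abs] using hg.norm
  have hgq : AEStronglyMeasurable (fun x => (x-a)^2/2 * |g x|^q)
      (volume.restrict (Ioc a m)) := by
    apply AEStronglyMeasurable.mul
      (Continuous.aestronglyMeasurable (by continuity))
    exact ((Real.continuous_rpow_const hq0.le).measurable.comp_aemeasurable
      habs.aemeasurable).aestronglyMeasurable
  have hJ_int : IntegrableOn (fun x => (x-a)^2/2 * |g x|^q) (Ioc a m) := by
    apply Integrable.mono' h_int hgq
    rw [ae_restrict_iff' measurableSet_Ioc]
    filter_upwards with x hx
    rw [Real.norm_eq_abs, abs_of_nonneg (by positivity)]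
    exact hptle x hx
  have hJ_le : ∫ x in Ioc a m, (x-a)^2/2 * |g x|^q ≤ (b-a)^3/2 * S := by
    rw [← hIh]
    apply setIntegral_mono_on hJ_int h_int measurableSet_Ioc hptle
  have hJ_nonneg : 0 ≤ ∫ x in Ioc a m, (x-a)^2/2 * |g x|^q := by
    apply setIntegral_nonneg measurableSet_Ioc
    intro x _; positivity
  -- split on q = 1 vs q > 1
  rcases eq_or_lt_of_le hq with hq1 | hq1
  · -- q = 1
    subst hq1
    rw [show (1:ℝ) - 1/1 = 0 by norm_num, Real.rpow_zero, one_mul,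
        show (1:ℝ)/1 = 1 by norm_num, Real.rpow_one,
        intervalIntegral.integral_of_le ham.le]
    calc (∫ x in Ioc a m, (x-a)^2/2 * |g x|)
        = ∫ x in Ioc a m, (x-a)^2/2 * |g x|^(1:ℝ) := by
          simp [Real.rpow_one]
      _ ≤ (b-a)^3/2 * S := hJ_le
  · -- q > 1  : Hölder
    have hqne : q ≠ 0 := hq0.ne'
    have hq'c : (q/(q-1)).HolderConjugate q := (Real.HolderConjugate.conjExponent hq1).symm
    set q' : ℝ := q/(q-1) with hq'def
    have hq'pos : 0 < q' := hq'c.pos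
    have hq'ne : q' ≠ 0 := hq'pos.ne'
    have hq'inv : 1/q' = 1 - 1/q := by
      rw [hq'def]
      have h1 : q - 1 ≠ 0 := sub_ne_zero.mpr (ne_of_gt hq1)
      field_simp
    have finμ : IsFiniteMeasure (volume.restrict (Ioc a m)) :=
      ⟨by rw [Measure.restrict_apply_univ]; exact measure_Ioc_lt_top⟩
    set fH : ℝ → ℝ := fun x => ((x-a)^2/2)^(1/q') with hfHdef
    set gH : ℝ → ℝ := fun x => ((x-a)^2/2)^(1/q) * |g x| with hgHdef
    have hfH_nn : ∀ x, 0 ≤ fH x := fun x => Real.rpow_nonneg (by positivity) _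
    have hgH_nn : ∀ x, 0 ≤ gH x :=
      fun x => mul_nonneg (Real.rpow_nonneg (by positivity) _) (abs_nonneg _)
    have hpcont : Continuous (fun x : ℝ => (x-a)^2/2) :=
      ((continuous_id.sub continuous_const).pow 2).div_const 2
    have hfH_mem : MemLp fH (ENNReal.ofReal q') (volume.restrict (Ioc a m)) := by
      apply MemLp.of_bound
        (Continuous.aestronglyMeasurable
          (hpcont.rpow_const (fun x => Or.inr (one_div_nonneg.mpr hq'pos.le))))
        (((b-a)^2)^(1/q'))
      rw [ae_restrict_iff' measurableSet_Ioc]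
      filter_upwards with x hx
      rw [Real.norm_eq_abs, abs_of_nonneg (hfH_nn x)]
      simp only [hfHdef]
      have h1 := hx.1; have h2 := hx.2
      rw [hm] at h2
      have hle : (x-a)^2/2 ≤ (b-a)^2 := by nlinarith
      exact Real.rpow_le_rpow (by positivity) hle (one_div_nonneg.mpr hq'pos.le)
    have hgH_mem : MemLp gH (ENNReal.ofReal q) (volume.restrict (Ioc a m)) := by
      apply MemLp.of_bound
        ((Continuous.aestronglyMeasurable
          (hpcont.rpow_const (fun x => Or.inr (one_div_nonneg.mpr hq0.le)))).mul habs)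
        ((A*(b-a)^2 + B*(b-a)^2)^(1/q))
      rw [ae_restrict_iff' measurableSet_Ioc]
      filter_upwards with x hx
      show ‖gH x‖ ≤ (A*(b-a)^2 + B*(b-a)^2)^(1/q)
      rw [Real.norm_eq_abs, abs_of_nonneg (hgH_nn x)]
      have hxa : a < x := hx.1
      have hxm : x ≤ m := hx.2
      have hxb : x < b := lt_of_le_of_lt hxm hmb
      have hq1' : gH x ^ q = (x-a)^2/2 * |g x|^q := by
        rw [hgHdef]
        rw [Real.mul_rpow (Real.rpow_nonneg (by positivity) _) (abs_nonneg _),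
          ← Real.rpow_mul (by positivity), one_div_mul_cancel hqne, Real.rpow_one]
      have hhle : h x ≤ A*(b-a)^2 + B*(b-a)^2 := by
        simp only [hh]
        have hd : (x-a)^2/(b-x) ≤ b-a := by
          rw [div_le_iff₀ (by linarith)]
          rw [hm] at hxm
          nlinarith
        rw [hm] at hxm
        nlinarith [mul_le_mul_of_nonneg_left hd (by positivity : (0:ℝ) ≤ A*(b-a)/2),
          mul_le_mul_of_nonneg_left (show x - a ≤ b - a by linarith)
            (by positivity : (0:ℝ) ≤ B*(b-a)/2)]
      have h1 : gH x ^ q ≤ A*(b-a)^2 + B*(b-a)^2 := by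
        rw [hq1']
        exact le_trans (hptle x hx) hhle
      calc gH x = (gH x ^ q)^(1/q) := by
            rw [← Real.rpow_mul (hgH_nn x), mul_one_div_cancel hqne, Real.rpow_one]
        _ ≤ (A*(b-a)^2 + B*(b-a)^2)^(1/q) :=
            Real.rpow_le_rpow (Real.rpow_nonneg (hgH_nn x) _) h1 (one_div_nonneg.mpr hq0.le)
    have holder := integral_mul_le_Lp_mul_Lq_of_nonneg hq'c
      (ae_of_all _ hfH_nn) (ae_of_all _ hgH_nn) hfH_mem hgH_mem
    have e1 : (∫ x in Ioc a m, fH x * gH x) = ∫ x in Ioc a m, (x-a)^2/2 * |g x| := by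
      apply setIntegral_congr_fun measurableSet_Ioc
      intro x hx
      have hxa : a < x := hx.1
      have hp : (0:ℝ) < (x-a)^2/2 := div_pos (pow_pos (sub_pos.mpr hxa) 2) two_pos
      simp only [hfHdef, hgHdef]
      rw [← mul_assoc, ← Real.rpow_add hp]
      have : 1/q' + 1/q = 1 := by
        rw [one_div, one_div]; exact hq'c.inv_add_inv_eq_one
      rw [this, Real.rpow_one]
    have e2 : (∫ x in Ioc a m, fH x ^ q') = (b-a)^3/48 := by
      have : (∫ x in Ioc a m, fH x ^ q') = ∫ x in Ioc a m, (x-a)^2/2 := by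
        apply setIntegral_congr_fun measurableSet_Ioc
        intro x hx
        simp only [hfHdef]
        rw [← Real.rpow_mul (by positivity), one_div_mul_cancel hq'ne, Real.rpow_one]
      rw [this, ← intervalIntegral.integral_of_le ham.le, integral_sq a b hab]
    have e3 : (∫ x in Ioc a m, gH x ^ q) = ∫ x in Ioc a m, (x-a)^2/2 * |g x|^q := by
      apply setIntegral_congr_fun measurableSet_Ioc
      intro x hx
      simp only [hgHdef]
      rw [Real.mul_rpow (Real.rpow_nonneg (by positivity) _) (abs_nonneg _),
        ← Real.rpow_mul (by positivity), one_div_mul_cancel hqne, Real.rpow_one]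
    rw [e1, e2, e3] at holder
    rw [intervalIntegral.integral_of_le ham.le]
    refine le_trans holder ?_
    rw [hq'inv]
    apply mul_le_mul_of_nonneg_left
      (Real.rpow_le_rpow hJ_nonneg hJ_le (one_div_nonneg.mpr hq0.le))
      (Real.rpow_nonneg (by positivity) _)

end GLAux

open intervalIntegral in
set_option maxHeartbeats 1000000 in
theorem godunova_levin_midpoint_power_ineq
    (I : Set ℝ) (hI : IsOpen I) (hI' : I.OrdConnected)
    (a b : ℝ) (ha : a ∈ I) (hb : b ∈ I) (hab : a < b)
    (f f' f'' : ℝ → ℝ)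
    (hf' : ∀ x ∈ I, HasDerivAt f (f' x) x)
    (hf'' : ∀ x ∈ I, HasDerivAt f' (f'' x) x)
    (hint : IntervalIntegrable f'' volume a b)
    (q : ℝ) (hq : 1 ≤ q)
    (hQ : GodunovaLevin I (fun x => |f'' x| ^ q)) :
    |(1 / (b - a)) * (∫ x in a..b, f x) - f ((a + b) / 2)|
      ≤ ((b - a) ^ 2 / 2) * ((1 / 24 : ℝ)) ^ (1 - 1 / q) *
        (((1 / 8) * |f'' a| ^ q + (Real.log 2 - 5 / 8) * |f'' b| ^ q) ^ (1 / q)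
          + ((Real.log 2 - 5 / 8) * |f'' a| ^ q + (1 / 8) * |f'' b| ^ q) ^ (1 / q)) := by
  have hIcc : Icc a b ⊆ I := hI'.out ha hb
  set m : ℝ := (a + b) / 2 with hm
  have hc : (0:ℝ) < b - a := by linarith
  have ham : a < m := by rw [hm]; linarith
  have hmb : m < b := by rw [hm]; linarith
  have hq0 : (0:ℝ) < q := by linarith
  have huIab : uIcc a b = Icc a b := uIcc_of_le hab.le
  have huIam : uIcc a m = Icc a m := uIcc_of_le ham.le
  have huImb : uIcc m b = Icc m b := uIcc_of_le hmb.le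
  have hamI : ∀ x ∈ Icc a m, x ∈ I := fun x hx => hIcc ⟨hx.1, le_trans hx.2 hmb.le⟩
  have hmbI : ∀ x ∈ Icc m b, x ∈ I := fun x hx => hIcc ⟨le_trans ham.le hx.1, hx.2⟩
  have hcf : ContinuousOn f (Icc a b) :=
    fun x hx => ((hf' x (hIcc hx)).continuousAt).continuousWithinAt
  have hcf' : ContinuousOn f' (Icc a b) :=
    fun x hx => ((hf'' x (hIcc hx)).continuousAt).continuousWithinAt
  have hder1 : ∀ c x : ℝ, HasDerivAt (fun y => (y - c)^2/2) (x - c) x := by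
    intro c x
    have h1 : HasDerivAt (fun y : ℝ => y - c) 1 x := (hasDerivAt_id x).sub_const c
    have := (h1.pow 2).div_const 2
    refine this.congr_deriv ?_
    push_cast; ring
  -- integrability facts
  have hintam : IntervalIntegrable f'' volume a m :=
    hint.mono_set (by rw [huIam, huIab]; exact Icc_subset_Icc le_rfl hmb.le)
  have hintmb : IntervalIntegrable f'' volume m b :=
    hint.mono_set (by rw [huImb, huIab]; exact Icc_subset_Icc ham.le le_rfl)
  have hintf'am : IntervalIntegrable f' volume a m := by
    apply ContinuousOn.intervalIntegrable
    rw [huIam]; exact hcf'.mono (Icc_subset_Icc le_rfl hmb.le)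
  have hintf'mb : IntervalIntegrable f' volume m b := by
    apply ContinuousOn.intervalIntegrable
    rw [huImb]; exact hcf'.mono (Icc_subset_Icc ham.le le_rfl)
  have hintfam : IntervalIntegrable f volume a m := by
    apply ContinuousOn.intervalIntegrable
    rw [huIam]; exact hcf.mono (Icc_subset_Icc le_rfl hmb.le)
  have hintfmb : IntervalIntegrable f volume m b := by
    apply ContinuousOn.intervalIntegrable
    rw [huImb]; exact hcf.mono (Icc_subset_Icc ham.le le_rfl)
  -- integration by parts
  have E1 : ∫ x in a..m, (x-a)^2/2 * f'' x
      = (m-a)^2/2 * f' m - (a-a)^2/2 * f' a - ∫ x in a..m, (x-a) * f' x := by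
    apply intervalIntegral.integral_mul_deriv_eq_deriv_mul
    · intro x _; exact hder1 a x
    · intro x hx; exact hf'' x (hamI x (huIam ▸ hx))
    · apply ContinuousOn.intervalIntegrable; fun_prop
    · exact hintam
  have E2 : ∫ x in a..m, (x-a) * f' x
      = (m-a) * f m - (a-a) * f a - ∫ x in a..m, 1 * f x := by
    apply intervalIntegral.integral_mul_deriv_eq_deriv_mul
    · intro x _; exact (hasDerivAt_id x).sub_const a
    · intro x hx; exact hf' x (hamI x (huIam ▸ hx))
    · apply ContinuousOn.intervalIntegrable; fun_prop
    · exact hintf'am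
  have E3 : ∫ x in m..b, (x-b)^2/2 * f'' x
      = (b-b)^2/2 * f' b - (m-b)^2/2 * f' m - ∫ x in m..b, (x-b) * f' x := by
    apply intervalIntegral.integral_mul_deriv_eq_deriv_mul
    · intro x _; exact hder1 b x
    · intro x hx; exact hf'' x (hmbI x (huImb ▸ hx))
    · apply ContinuousOn.intervalIntegrable; fun_prop
    · exact hintmb
  have E4 : ∫ x in m..b, (x-b) * f' x
      = (b-b) * f b - (m-b) * f m - ∫ x in m..b, 1 * f x := by
    apply intervalIntegral.integral_mul_deriv_eq_deriv_mul
    · intro x _; exact (hasDerivAt_id x).sub_const b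
    · intro x hx; exact hf' x (hmbI x (huImb ▸ hx))
    · apply ContinuousOn.intervalIntegrable; fun_prop
    · exact hintf'mb
  simp only [one_mul] at E2 E4
  have E5 : (∫ x in a..b, f x) = (∫ x in a..m, f x) + ∫ x in m..b, f x :=
    (intervalIntegral.integral_add_adjacent_intervals hintfam hintfmb).symm
  have hsq : (m-a)^2/2 = (m-b)^2/2 := by rw [hm]; ring
  have Hid : (∫ x in a..b, f x) - (b-a) * f m
      = (∫ x in a..m, (x-a)^2/2 * f'' x) + (∫ x in m..b, (x-b)^2/2 * f'' x) := by
    linear_combination E5 - E1 - E3 + E2 + E4 - f' m * hsq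
  have hX : (1 / (b - a)) * (∫ x in a..b, f x) - f m
      = ((∫ x in a..m, (x-a)^2/2 * f'' x) + (∫ x in m..b, (x-b)^2/2 * f'' x)) / (b-a) := by
    rw [← Hid]; field_simp
  rw [hX, abs_div, abs_of_pos hc, div_le_iff₀ hc]
  -- abs bounds
  have hLa_abs : |∫ x in a..m, (x-a)^2/2 * f'' x| ≤ ∫ x in a..m, (x-a)^2/2 * |f'' x| := by
    refine le_trans (intervalIntegral.abs_integral_le_integral_abs ham.le) (le_of_eq ?_)
    apply intervalIntegral.integral_congr
    intro x _
    show |(x-a)^2/2 * f'' x| = (x-a)^2/2 * |f'' x|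
    rw [abs_mul, abs_of_nonneg (by positivity : (0:ℝ) ≤ (x-a)^2/2)]
  have hLb_abs : |∫ x in m..b, (x-b)^2/2 * f'' x| ≤ ∫ x in m..b, (x-b)^2/2 * |f'' x| := by
    refine le_trans (intervalIntegral.abs_integral_le_integral_abs hmb.le) (le_of_eq ?_)
    apply intervalIntegral.integral_congr
    intro x _
    show |(x-b)^2/2 * f'' x| = (x-b)^2/2 * |f'' x|
    rw [abs_mul, abs_of_nonneg (by positivity : (0:ℝ) ≤ (x-b)^2/2)]
  have hAq : (0:ℝ) ≤ |f'' a| ^ q := Real.rpow_nonneg (abs_nonneg _) _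
  have hBq : (0:ℝ) ≤ |f'' b| ^ q := Real.rpow_nonneg (abs_nonneg _) _
  -- left half
  have hmeas1 : AEStronglyMeasurable f'' (volume.restrict (Ioc a ((a+b)/2))) := by
    rw [← hm]
    exact (hint.1.mono_set (Ioc_subset_Ioc le_rfl hmb.le)).aestronglyMeasurable
  have hbnd1 : ∀ x ∈ Ioc a ((a+b)/2),
      |f'' x| ^ q ≤ (|f'' a| ^ q) * (b-a)/(b-x) + (|f'' b| ^ q)*(b-a)/(x-a) := by
    rw [← hm]
    intro x hx
    obtain ⟨hxa, hxm⟩ := hx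
    have hxb : x < b := lt_of_le_of_lt hxm hmb
    have hl0 : 0 < (b-x)/(b-a) := div_pos (by linarith) hc
    have hl1 : (b-x)/(b-a) < 1 := by rw [div_lt_one hc]; linarith
    have key := hQ.2 a ha b hb _ hl0 hl1
    have hxeq : (b-x)/(b-a) * a + (1 - (b-x)/(b-a)) * b = x := by field_simp; ring
    rw [hxeq] at key
    simp only at key
    refine le_trans key (le_of_eq ?_)
    have h2 : 1 - (b-x)/(b-a) = (x-a)/(b-a) := by field_simp; ring
    rw [h2, div_div_eq_mul_div, div_div_eq_mul_div]
  have hHalf1 := half_estimate a b hab f'' hmeas1 q hq (|f'' a| ^ q) (|f'' b| ^ q)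
    hAq hBq hbnd1
  rw [← hm] at hHalf1
  -- right half
  have hm2 : ((-b) + -a)/2 = -m := by rw [hm]; ring
  have hmeas2 : AEStronglyMeasurable (fun x => f'' (-x))
      (volume.restrict (Ioc (-b) (((-b) + -a)/2))) := by
    rw [hm2]
    have h1 : IntegrableOn f'' (Ioc m b) := hint.1.mono_set (Ioc_subset_Ioc ham.le le_rfl)
    have h2 : AEStronglyMeasurable f'' (volume.restrict (Ico m b)) := by
      rw [Measure.restrict_congr_set Ico_ae_eq_Ioc]
      exact h1.aestronglyMeasurable
    have hpre : (fun x : ℝ => -x) ⁻¹' (Ico m b) = Ioc (-b) (-m) := by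
      ext x
      simp only [mem_preimage, mem_Ico, mem_Ioc]
      constructor <;> intro h <;> exact ⟨by linarith [h.1, h.2], by linarith [h.1, h.2]⟩
    have hmp : MeasurePreserving (fun x : ℝ => -x)
        (volume.restrict (Ioc (-b) (-m))) (volume.restrict (Ico m b)) := by
      have := (Measure.measurePreserving_neg (volume : Measure ℝ)).restrict_preimage
        (s := Ico m b) measurableSet_Ico
      rwa [hpre] at this
    exact h2.comp_measurePreserving hmp
  have hbnd2 : ∀ x ∈ Ioc (-b) (((-b) + -a)/2),
      |f'' (-x)| ^ q ≤ (|f'' b| ^ q) * ((-a)-(-b))/((-a)-x)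
        + (|f'' a| ^ q)*((-a)-(-b))/(x-(-b)) := by
    rw [hm2]
    intro x hx
    obtain ⟨hx1, hx2⟩ := hx
    have hmx : m ≤ -x := by linarith
    have hua : a < -x := by linarith
    have hub : -x < b := by linarith
    have hl0 : 0 < (b - -x)/(b-a) := div_pos (by linarith) hc
    have hl1 : (b - -x)/(b-a) < 1 := by rw [div_lt_one hc]; linarith
    have key := hQ.2 a ha b hb _ hl0 hl1
    have hxeq : (b - -x)/(b-a) * a + (1 - (b - -x)/(b-a)) * b = -x := by field_simp; ring
    rw [hxeq] at key
    simp only at key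
    refine le_trans key (le_of_eq ?_)
    have h2 : 1 - (b - -x)/(b-a) = ((-a) - x)/(b-a) := by field_simp; ring
    rw [h2, div_div_eq_mul_div, div_div_eq_mul_div]
    ring
  have hHalf2 := half_estimate (-b) (-a) (by linarith) (fun x => f'' (-x)) hmeas2 q hq
    (|f'' b| ^ q) (|f'' a| ^ q) hBq hAq hbnd2
  rw [hm2, show (-a:ℝ) - -b = b - a from by ring] at hHalf2
  -- reflect the right half integral
  have hrefl : (∫ x in (-b)..(-m), (x - -b)^2/2 * |f'' (-x)|)
      = ∫ x in m..b, (x-b)^2/2 * |f'' x| := by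
    obtain ⟨F, hF⟩ : ∃ F : ℝ → ℝ, F = fun u => (b - u)^2/2 * |f'' u| := ⟨_, rfl⟩
    calc (∫ x in (-b)..(-m), (x - -b)^2/2 * |f'' (-x)|)
        = ∫ x in (-b)..(-m), F (-x) := by
          apply intervalIntegral.integral_congr
          intro x _
          show (x - -b)^2/2 * |f'' (-x)| = F (-x)
          rw [hF]; ring
      _ = ∫ x in (-(-m))..(-(-b)), F x :=
          intervalIntegral.integral_comp_neg F
      _ = ∫ x in m..b, (x-b)^2/2 * |f'' x| := by
          rw [neg_neg, neg_neg]
          apply intervalIntegral.integral_congr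
          intro x _
          show F x = (x - b)^2/2 * |f'' x|
          rw [hF]; ring
  rw [hrefl] at hHalf2
  -- arithmetic
  have keyT : ∀ T : ℝ, 0 ≤ T →
      ((b-a)^3/48)^(1-1/q) * ((b-a)^3/2 * T)^(1/q)
        = (b-a)^3/2 * (1/24:ℝ)^(1-1/q) * T^(1/q) := by
    intro T hT
    have hpos : (0:ℝ) < (b-a)^3/2 := by positivity
    have h48 : (b-a)^3/48 = ((b-a)^3/2) * (1/24) := by ring
    rw [h48, Real.mul_rpow hpos.le (by norm_num : (0:ℝ) ≤ 1/24),
      Real.mul_rpow hpos.le hT]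
    calc (((b-a)^3/2)^(1-1/q) * ((1/24):ℝ)^(1-1/q)) * (((b-a)^3/2)^(1/q) * T^(1/q))
        = (((b-a)^3/2)^(1-1/q) * ((b-a)^3/2)^(1/q)) * (((1/24):ℝ)^(1-1/q) * T^(1/q)) := by
          ring
      _ = ((b-a)^3/2) * (((1/24):ℝ)^(1-1/q) * T^(1/q)) := by
          rw [← Real.rpow_add hpos, sub_add_cancel, Real.rpow_one]
      _ = (b-a)^3/2 * (1/24:ℝ)^(1-1/q) * T^(1/q) := by ring
  have hlog : (0:ℝ) < Real.log 2 - 5/8 := by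
    have := Real.log_two_gt_d9; linarith
  have hS1 : (0:ℝ) ≤ (Real.log 2 - 5/8) * (|f'' a| ^ q) + (|f'' b| ^ q)/8 := by positivity
  have hS2 : (0:ℝ) ≤ (Real.log 2 - 5/8) * (|f'' b| ^ q) + (|f'' a| ^ q)/8 := by positivity
  rw [keyT _ hS1] at hHalf1
  rw [keyT _ hS2] at hHalf2
  calc |(∫ x in a..m, (x-a)^2/2 * f'' x) + ∫ x in m..b, (x-b)^2/2 * f'' x|
      ≤ |∫ x in a..m, (x-a)^2/2 * f'' x| + |∫ x in m..b, (x-b)^2/2 * f'' x| := abs_add_le _ _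
    _ ≤ (∫ x in a..m, (x-a)^2/2 * |f'' x|) + ∫ x in m..b, (x-b)^2/2 * |f'' x| :=
        add_le_add hLa_abs hLb_abs
    _ ≤ ((b-a)^3/2 * (1/24:ℝ)^(1-1/q)
          * ((Real.log 2 - 5/8) * (|f'' a| ^ q) + (|f'' b| ^ q)/8)^(1/q))
        + ((b-a)^3/2 * (1/24:ℝ)^(1-1/q)
          * ((Real.log 2 - 5/8) * (|f'' b| ^ q) + (|f'' a| ^ q)/8)^(1/q)) :=
        add_le_add hHalf1 hHalf2
    _ = ((b - a) ^ 2 / 2) * ((1 / 24 : ℝ)) ^ (1 - 1 / q) *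
        (((1 / 8) * |f'' a| ^ q + (Real.log 2 - 5 / 8) * |f'' b| ^ q) ^ (1 / q)
          + ((Real.log 2 - 5 / 8) * |f'' a| ^ q + (1 / 8) * |f'' b| ^ q) ^ (1 / q))
          * (b - a) := by
        rw [show (Real.log 2 - 5/8) * (|f'' b| ^ q) + (|f'' a| ^ q)/8
            = (1/8) * |f'' a| ^ q + (Real.log 2 - 5/8) * |f'' b| ^ q from by ring,
          show (Real.log 2 - 5/8) * (|f'' a| ^ q) + (|f'' b| ^ q)/8
            = (Real.log 2 - 5/8) * |f'' a| ^ q + (1/8) * |f'' b| ^ q from by ring]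
        ring
end

section
/- Let I ⊂ ℝ be an open interval, a, b ∈ I with a < b, f : I → ℝ a twice differentiable mapping such that f'' is integrable on [a,b], let q ≥ 1, and suppose |f''|^q belongs to the Godunova-Levin class Q(I). Then |(1/(b−a))·∫ₐᵇ f(x) dx − (f(a)+f(b))/2| ≤ ((b−a)²/2) · (1/12)^(1 − 1/q) · { ( (3/8)·|f''(a)|^q + (1/8)·|f''(b)|^q )^(1/q) + ( (1/8)·|f''(a)|^q + (3/8)·|f''(b)|^q )^(1/q) }. -/
open MeasureTheory Set Real

lemma holder_weighted {μ : Measure ℝ} (w g : ℝ → ℝ) (hw : ∀ x, 0 ≤ w x) (hg : ∀ x, 0 ≤ g x)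
    (q : ℝ) (hq : 1 ≤ q)
    (hmw : AEMeasurable w μ) (hmg : AEMeasurable g μ)
    (h1 : Integrable w μ) (h2 : Integrable (fun x => w x * g x ^ q) μ) :
    ∫ x, w x * g x ∂μ ≤ (∫ x, w x ∂μ) ^ (1 - 1/q) * (∫ x, w x * g x ^ q ∂μ) ^ (1/q) := by
  rcases eq_or_lt_of_le hq with h | h
  · subst h
    simp [Real.rpow_one]
  · set p : ℝ := q/(q-1) with hp
    have hpq : p.HolderConjugate q := (Real.HolderConjugate.conjExponent h).symm
    have hp0 : (0:ℝ) < p := hpq.pos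
    have hq0 : (0:ℝ) < q := hpq.symm.pos
    set F : ℝ → ℝ := fun x => w x ^ (1/p) with hF
    set G : ℝ → ℝ := fun x => w x ^ (1/q) * g x with hG
    have hFp : ∀ x, F x ^ p = w x := by
      intro x
      rw [hF, ← Real.rpow_mul (hw x), one_div_mul_cancel hp0.ne', Real.rpow_one]
    have hGq : ∀ x, G x ^ q = w x * g x ^ q := by
      intro x
      rw [hG, Real.mul_rpow (Real.rpow_nonneg (hw x) _) (hg x),
        ← Real.rpow_mul (hw x), one_div_mul_cancel hq0.ne', Real.rpow_one]
    have hsum : (1:ℝ)/p + 1/q = 1 := by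
      rw [one_div, one_div]; exact hpq.inv_add_inv_eq_one
    have hFG : ∀ x, F x * G x = w x * g x := by
      intro x
      rw [hF, hG, ← mul_assoc, ← Real.rpow_add' (hw x) (by rw [hsum]; norm_num), hsum,
        Real.rpow_one]
    have hFm : AEStronglyMeasurable F μ :=
      (hmw.pow aemeasurable_const).aestronglyMeasurable
    have hGm : AEStronglyMeasurable G μ :=
      ((hmw.pow aemeasurable_const).mul hmg).aestronglyMeasurable
    have hp0' : ENNReal.ofReal p ≠ 0 := by
      simp [ENNReal.ofReal_eq_zero, not_le, hp0]
    have hq0' : ENNReal.ofReal q ≠ 0 := by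
      simp [ENNReal.ofReal_eq_zero, not_le, hq0]
    have hMF : MemLp F (ENNReal.ofReal p) μ := by
      apply (memLp_norm_rpow_iff hFm hp0' ENNReal.ofReal_ne_top).mp
      have he : (fun x => ‖F x‖ ^ (ENNReal.ofReal p).toReal) = w := by
        funext x
        rw [ENNReal.toReal_ofReal hp0.le, Real.norm_eq_abs,
          abs_of_nonneg (Real.rpow_nonneg (hw x) _), hFp x]
      rw [he, ENNReal.div_self hp0' ENNReal.ofReal_ne_top]
      exact (memLp_one_iff_integrable).mpr h1
    have hMG : MemLp G (ENNReal.ofReal q) μ := by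
      apply (memLp_norm_rpow_iff hGm hq0' ENNReal.ofReal_ne_top).mp
      have he : (fun x => ‖G x‖ ^ (ENNReal.ofReal q).toReal) = fun x => w x * g x ^ q := by
        funext x
        rw [ENNReal.toReal_ofReal hq0.le, Real.norm_eq_abs,
          abs_of_nonneg (mul_nonneg (Real.rpow_nonneg (hw x) _) (hg x)), hGq x]
      rw [he, ENNReal.div_self hq0' ENNReal.ofReal_ne_top]
      exact (memLp_one_iff_integrable).mpr h2
    have key := integral_mul_le_Lp_mul_Lq_of_nonneg hpq
      (Filter.Eventually.of_forall fun x => Real.rpow_nonneg (hw x) _)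
      (Filter.Eventually.of_forall fun x => mul_nonneg (Real.rpow_nonneg (hw x) _) (hg x))
      hMF hMG
    have h1p : (1:ℝ)/p = 1 - 1/q := by
      rw [one_div, one_div, ← hpq.inv_add_inv_eq_one]; ring
    calc ∫ x, w x * g x ∂μ = ∫ x, F x * G x ∂μ := by simp_rw [hFG]
      _ ≤ (∫ x, F x ^ p ∂μ) ^ (1/p) * (∫ x, G x ^ q ∂μ) ^ (1/q) := key
      _ = (∫ x, w x ∂μ) ^ (1 - 1/q) * (∫ x, w x * g x ^ q ∂μ) ^ (1/q) := by
          simp_rw [hFp, hGq, h1p]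

lemma piece_bound {a b c d : ℝ} (hab : a < b) (hcd : c ≤ d) (hc : a ≤ c) (hd : d ≤ b)
    {h : ℝ → ℝ} (hmg : AEMeasurable (fun x => |h x|) (volume.restrict (Ioc c d)))
    {q A B : ℝ} (hq : 1 ≤ q) (hA : 0 ≤ A) (hB : 0 ≤ B)
    (hpt : ∀ x ∈ Icc a b, (x-a)*(b-x)*|h x|^q ≤ (b-a)*(A*(x-a)+B*(b-x))) :
    ∫ x in c..d, (x-a)*(b-x)*|h x|
      ≤ (∫ x in c..d, (x-a)*(b-x)) ^ (1-1/q)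
        * (∫ x in c..d, (b-a)*(A*(x-a)+B*(b-x))) ^ (1/q) := by
  set μ := volume.restrict (Ioc c d) with hμ
  have hsubIcc : Ioc c d ⊆ Icc a b :=
    Ioc_subset_Icc_self.trans (Icc_subset_Icc hc hd)
  set w : ℝ → ℝ := fun x => |(x-a)*(b-x)| with hw
  set g : ℝ → ℝ := fun x => |h x| with hg
  have hwx : ∀ x ∈ Icc a b, w x = (x-a)*(b-x) := fun x hx =>
    abs_of_nonneg (mul_nonneg (sub_nonneg.2 hx.1) (sub_nonneg.2 hx.2))
  set D : ℝ → ℝ := fun x => (b-a)*(A*(x-a)+B*(b-x)) with hD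
  have hDcont : Continuous D := by fun_prop
  have hwcont : Continuous w := by
    apply Continuous.abs; fun_prop
  have hDint : Integrable D μ := hDcont.integrableOn_Ioc
  have h1 : Integrable w μ := hwcont.integrableOn_Ioc
  have hbound : ∀ x ∈ Ioc c d, w x * g x ^ q ≤ D x := by
    intro x hx
    rw [hwx x (hsubIcc hx)]
    exact hpt x (hsubIcc hx)
  have hmeas : AEStronglyMeasurable (fun x => w x * g x ^ q) μ :=
    ((hwcont.aemeasurable).mul (hmg.pow aemeasurable_const)).aestronglyMeasurable
  have h2 : Integrable (fun x => w x * g x ^ q) μ := by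
    apply Integrable.mono' hDint hmeas
    rw [hμ, ae_restrict_iff' measurableSet_Ioc]
    refine Filter.Eventually.of_forall fun x hx => ?_
    rw [Real.norm_eq_abs,
      abs_of_nonneg (mul_nonneg (abs_nonneg _) (Real.rpow_nonneg (abs_nonneg _) _))]
    exact hbound x hx
  have key := holder_weighted w g (fun x => abs_nonneg _) (fun x => abs_nonneg _) q hq
    hwcont.aemeasurable hmg h1 h2
  have e1 : ∫ x in c..d, (x-a)*(b-x)*|h x| = ∫ x, w x * g x ∂μ := by
    rw [intervalIntegral.integral_of_le hcd]
    exact setIntegral_congr_fun measurableSet_Ioc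
      (fun x hx => by rw [hwx x (hsubIcc hx)])
  have e2 : ∫ x in c..d, (x-a)*(b-x) = ∫ x, w x ∂μ := by
    rw [intervalIntegral.integral_of_le hcd]
    exact setIntegral_congr_fun measurableSet_Ioc
      (fun x hx => (hwx x (hsubIcc hx)).symm)
  have e3 : ∫ x, w x * g x ^ q ∂μ ≤ ∫ x in c..d, D x := by
    rw [intervalIntegral.integral_of_le hcd]
    exact setIntegral_mono_on h2 hDint measurableSet_Ioc hbound
  have hnn : 0 ≤ ∫ x, w x * g x ^ q ∂μ :=
    integral_nonneg fun x => mul_nonneg (abs_nonneg _) (Real.rpow_nonneg (abs_nonneg _) _)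
  calc ∫ x in c..d, (x-a)*(b-x)*|h x| = ∫ x, w x * g x ∂μ := e1
    _ ≤ (∫ x, w x ∂μ) ^ (1-1/q) * (∫ x, w x * g x ^ q ∂μ) ^ (1/q) := key
    _ ≤ (∫ x, w x ∂μ) ^ (1-1/q) * (∫ x in c..d, D x) ^ (1/q) := by
        apply mul_le_mul_of_nonneg_left _ (Real.rpow_nonneg (integral_nonneg fun x => abs_nonneg _) _)
        exact Real.rpow_le_rpow hnn e3 (by positivity)
    _ = (∫ x in c..d, (x-a)*(b-x)) ^ (1-1/q) * (∫ x in c..d, (b-a)*(A*(x-a)+B*(b-x))) ^ (1/q) := by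
        rw [e2]

theorem godunova_levin_trapezoid_power_ineq
    (I : Set ℝ) (hI : IsOpen I) (hI' : I.OrdConnected)
    (a b : ℝ) (ha : a ∈ I) (hb : b ∈ I) (hab : a < b)
    (f f' f'' : ℝ → ℝ)
    (hf' : ∀ x ∈ I, HasDerivAt f (f' x) x)
    (hf'' : ∀ x ∈ I, HasDerivAt f' (f'' x) x)
    (hint : IntervalIntegrable f'' volume a b)
    (q : ℝ) (hq : 1 ≤ q)
    (hQ : GodunovaLevin I (fun x => |f'' x| ^ q)) :
    |(1 / (b - a)) * (∫ x in a..b, f x) - (f a + f b) / 2|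
      ≤ ((b - a) ^ 2 / 2) * ((1 / 12 : ℝ)) ^ (1 - 1 / q) *
        (((3 / 8) * |f'' a| ^ q + (1 / 8) * |f'' b| ^ q) ^ (1 / q)
          + ((1 / 8) * |f'' a| ^ q + (3 / 8) * |f'' b| ^ q) ^ (1 / q)) := by
  have hba : (0:ℝ) < b - a := sub_pos.2 hab
  have hsub : Icc a b ⊆ I := hI'.out ha hb
  have huIcc : uIcc a b = Icc a b := uIcc_of_le hab.le
  set m : ℝ := (a+b)/2 with hm
  have ham : a ≤ m := by rw [hm]; linarith
  have hmb : m ≤ b := by rw [hm]; linarith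
  set A : ℝ := |f'' a| ^ q with hA
  set B : ℝ := |f'' b| ^ q with hB
  have hA0 : 0 ≤ A := Real.rpow_nonneg (abs_nonneg _) _
  have hB0 : 0 ≤ B := Real.rpow_nonneg (abs_nonneg _) _
  have hcf : ContinuousOn f (uIcc a b) := by
    rw [huIcc]
    exact fun x hx => (hf' x (hsub hx)).continuousAt.continuousWithinAt
  have hcf' : ContinuousOn f' (uIcc a b) := by
    rw [huIcc]
    exact fun x hx => (hf'' x (hsub hx)).continuousAt.continuousWithinAt
  -- integration by parts, twice
  have step1 : ∫ x in a..b, (a+b-2*x) * f' x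
      = (a-b)*f b - (b-a)*f a + 2*(∫ x in a..b, f x) := by
    have hu : ∀ x ∈ uIcc a b, HasDerivAt (fun y => a+b-2*y) (-2 : ℝ) x := by
      intro x _
      have h2 := ((hasDerivAt_id x).const_mul (2:ℝ)).const_sub (a+b)
      refine h2.congr_deriv ?_
      ring
    have hv : ∀ x ∈ uIcc a b, HasDerivAt f (f' x) x := by
      rw [huIcc]; exact fun x hx => hf' x (hsub hx)
    have hparts := intervalIntegral.integral_mul_deriv_eq_deriv_mul hu hv
      intervalIntegrable_const hcf'.intervalIntegrable
    rw [hparts, intervalIntegral.integral_const_mul]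
    ring
  have step2 : ∫ x in a..b, ((x-a)*(b-x)) * f'' x
      = - ∫ x in a..b, (a+b-2*x) * f' x := by
    have hu : ∀ x ∈ uIcc a b, HasDerivAt (fun y => (y-a)*(b-y)) (a+b-2*x) x := by
      intro x _
      have h2 := ((hasDerivAt_id x).sub_const a).mul ((hasDerivAt_id x).const_sub b)
      refine h2.congr_deriv ?_
      simp only [id_eq]
      ring
    have hv : ∀ x ∈ uIcc a b, HasDerivAt f' (f'' x) x := by
      rw [huIcc]; exact fun x hx => hf'' x (hsub hx)
    have hpoly : IntervalIntegrable (fun x => a+b-2*x) volume a b :=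
      (by fun_prop : Continuous fun x : ℝ => a+b-2*x).intervalIntegrable a b
    have hparts := intervalIntegral.integral_mul_deriv_eq_deriv_mul hu hv hpoly hint
    rw [hparts]
    ring
  have identity : ∫ x in a..b, ((x-a)*(b-x)) * f'' x
      = (b-a)*(f a + f b) - 2*(∫ x in a..b, f x) := by
    rw [step2, step1]; ring
  have hLHS : (1 / (b - a)) * (∫ x in a..b, f x) - (f a + f b) / 2
      = -(∫ x in a..b, ((x-a)*(b-x)) * f'' x) / (2*(b-a)) := by
    rw [identity]
    field_simp
    ring
  rw [hLHS, abs_div, abs_neg, abs_of_pos (by linarith : (0:ℝ) < 2*(b-a))]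
  -- pointwise Godunova-Levin bound
  have hpt : ∀ x ∈ Icc a b, (x-a)*(b-x)*|f'' x|^q ≤ (b-a)*(A*(x-a)+B*(b-x)) := by
    intro x hx
    rcases eq_or_lt_of_le hx.1 with rfl | hax
    · nlinarith [mul_nonneg hA0 hba.le, mul_nonneg hB0 hba.le, mul_nonneg (mul_nonneg hB0 hba.le) hba.le]
    rcases eq_or_lt_of_le hx.2 with rfl | hxb
    · nlinarith [mul_nonneg hA0 hba.le, mul_nonneg (mul_nonneg hA0 hba.le) hba.le]
    · have hl0 : 0 < (b-x)/(b-a) := div_pos (by linarith) hba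
      have hl1 : (b-x)/(b-a) < 1 := by
        rw [div_lt_one hba]; linarith
      have hGL := hQ.2 a ha b hb ((b-x)/(b-a)) hl0 hl1
      have hx' : (b-x)/(b-a)*a + (1-(b-x)/(b-a))*b = x := by
        field_simp
        ring
      simp only [hx'] at hGL
      have hw0 : 0 ≤ (x-a)*(b-x) := mul_nonneg (by linarith) (by linarith)
      have step := mul_le_mul_of_nonneg_left hGL hw0
      have hbx : b - x ≠ 0 := by intro h0; rw [sub_eq_zero] at h0; exact hxb.ne h0.symm
      have hxa : x - a ≠ 0 := by intro h0; rw [sub_eq_zero] at h0; exact hax.ne h0.symm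
      calc (x-a)*(b-x)*|f'' x|^q ≤ (x-a)*(b-x)*(A/((b-x)/(b-a)) + B/(1-(b-x)/(b-a))) := step
        _ = (b-a)*(A*(x-a)+B*(b-x)) := by
            rw [div_div_eq_mul_div, show (1-(b-x)/(b-a) : ℝ) = (x-a)/(b-a) by field_simp; ring,
              div_div_eq_mul_div]
            field_simp
  -- measurability
  have hmg0 : AEMeasurable f'' (volume.restrict (Ioc a b)) := hint.1.aemeasurable
  have hmg1 : AEMeasurable (fun x => |f'' x|) (volume.restrict (Ioc a m)) :=
    measurable_abs.comp_aemeasurable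
      (hmg0.mono_measure (Measure.restrict_mono (Ioc_subset_Ioc_right hmb) le_rfl))
  have hmg2 : AEMeasurable (fun x => |f'' x|) (volume.restrict (Ioc m b)) :=
    measurable_abs.comp_aemeasurable
      (hmg0.mono_measure (Measure.restrict_mono (Ioc_subset_Ioc_left ham) le_rfl))
  -- the two Hölder estimates
  have p1 := piece_bound hab ham le_rfl hmb hmg1 hq hA0 hB0 hpt
  have p2 := piece_bound hab hmb ham le_rfl hmg2 hq hA0 hB0 hpt
  -- polynomial integrals
  have hP : ∀ x : ℝ, HasDerivAt (fun y => (a+b)/2*y^2 - y^3/3 - a*b*y) ((x-a)*(b-x)) x := by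
    intro x
    have h1 := (((hasDerivAt_pow 2 x).const_mul ((a+b)/2)).sub
      ((hasDerivAt_pow 3 x).div_const 3)).sub ((hasDerivAt_id x).const_mul (a*b))
    refine h1.congr_deriv ?_
    try simp only [id_eq]
    push_cast
    ring
  have hpolyint : IntervalIntegrable (fun x => (x-a)*(b-x)) volume a m ∧
      IntervalIntegrable (fun x => (x-a)*(b-x)) volume m b :=
    ⟨(by fun_prop : Continuous fun x : ℝ => (x-a)*(b-x)).intervalIntegrable _ _,
     (by fun_prop : Continuous fun x : ℝ => (x-a)*(b-x)).intervalIntegrable _ _⟩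
  have I1 : ∫ x in a..m, (x-a)*(b-x) = (b-a)^3/12 := by
    rw [intervalIntegral.integral_eq_sub_of_hasDerivAt (fun x _ => hP x) hpolyint.1, hm]
    ring
  have I2 : ∫ x in m..b, (x-a)*(b-x) = (b-a)^3/12 := by
    rw [intervalIntegral.integral_eq_sub_of_hasDerivAt (fun x _ => hP x) hpolyint.2, hm]
    ring
  have hPD : ∀ x : ℝ, HasDerivAt (fun y => (b-a)*(A*(y-a)^2/2 - B*(b-y)^2/2))
      ((b-a)*(A*(x-a)+B*(b-x))) x := by
    intro x
    have h1 := (((((hasDerivAt_id x).sub_const a).pow 2).const_mul A).div_const 2).sub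
      (((((hasDerivAt_id x).const_sub b).pow 2).const_mul B).div_const 2)
    have h2 := h1.const_mul (b-a)
    refine h2.congr_deriv ?_
    try simp only [id_eq]
    push_cast
    ring
  have hDint : IntervalIntegrable (fun x => (b-a)*(A*(x-a)+B*(b-x))) volume a m ∧
      IntervalIntegrable (fun x => (b-a)*(A*(x-a)+B*(b-x))) volume m b :=
    ⟨(by fun_prop : Continuous fun x : ℝ => (b-a)*(A*(x-a)+B*(b-x))).intervalIntegrable _ _,
     (by fun_prop : Continuous fun x : ℝ => (b-a)*(A*(x-a)+B*(b-x))).intervalIntegrable _ _⟩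
  have I3 : ∫ x in a..m, (b-a)*(A*(x-a)+B*(b-x)) = (b-a)^3*(1/8*A + 3/8*B) := by
    rw [intervalIntegral.integral_eq_sub_of_hasDerivAt (fun x _ => hPD x) hDint.1, hm]
    ring
  have I4 : ∫ x in m..b, (b-a)*(A*(x-a)+B*(b-x)) = (b-a)^3*(3/8*A + 1/8*B) := by
    rw [intervalIntegral.integral_eq_sub_of_hasDerivAt (fun x _ => hPD x) hDint.2, hm]
    ring
  rw [I1, I3] at p1
  rw [I2, I4] at p2
  -- rpow algebra
  have hcomb : ∀ S : ℝ, 0 ≤ S →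
      ((b-a)^3/12 : ℝ)^(1-1/q) * ((b-a)^3*S)^(1/q)
        = (b-a)^3 * ((1/12:ℝ))^(1-1/q) * S^(1/q) := by
    intro S hS
    have h3 : (0:ℝ) ≤ (b-a)^3 := by positivity
    rw [show ((b-a)^3/12 : ℝ) = (b-a)^3 * (1/12) by ring,
      Real.mul_rpow h3 (by norm_num), Real.mul_rpow h3 hS]
    have hbb : ((b-a)^3 : ℝ)^(1-1/q) * ((b-a)^3)^(1/q) = (b-a)^3 := by
      rw [← Real.rpow_add (by positivity), sub_add_cancel, Real.rpow_one]
    linear_combination ((1/12:ℝ)^(1-1/q) * S^(1/q)) * hbb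
  rw [hcomb _ (by positivity)] at p1
  rw [hcomb _ (by positivity)] at p2
  -- splitting the integral
  have hWint : IntervalIntegrable (fun x => (x-a)*(b-x)*|f'' x|) volume a b := by
    apply IntervalIntegrable.continuousOn_mul hint.abs
    fun_prop
  have hsplit : ∫ x in a..b, (x-a)*(b-x)*|f'' x|
      = (∫ x in a..m, (x-a)*(b-x)*|f'' x|) + ∫ x in m..b, (x-a)*(b-x)*|f'' x| := by
    refine (intervalIntegral.integral_add_adjacent_intervals
      (hWint.mono_set ?_) (hWint.mono_set ?_)).symm
    · rw [uIcc_of_le ham, huIcc]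
      exact Icc_subset_Icc_right hmb
    · rw [uIcc_of_le hmb, huIcc]
      exact Icc_subset_Icc_left ham
  have habs : |∫ x in a..b, ((x-a)*(b-x)) * f'' x|
      ≤ ∫ x in a..b, (x-a)*(b-x)*|f'' x| := by
    refine (intervalIntegral.abs_integral_le_integral_abs hab.le).trans_eq ?_
    apply intervalIntegral.integral_congr
    intro x hx
    rw [huIcc] at hx
    show |(x-a)*(b-x)*f'' x| = (x-a)*(b-x)*|f'' x|
    rw [abs_mul, abs_of_nonneg (mul_nonneg (sub_nonneg.2 hx.1) (sub_nonneg.2 hx.2))]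
  have hfinal : |∫ x in a..b, ((x-a)*(b-x)) * f'' x|
      ≤ (b-a)^3 * ((1/12:ℝ))^(1-1/q) * ((1/8*A + 3/8*B)^(1/q) + (3/8*A + 1/8*B)^(1/q)) := by
    calc |∫ x in a..b, ((x-a)*(b-x)) * f'' x|
        ≤ ∫ x in a..b, (x-a)*(b-x)*|f'' x| := habs
      _ = (∫ x in a..m, (x-a)*(b-x)*|f'' x|) + ∫ x in m..b, (x-a)*(b-x)*|f'' x| := hsplit
      _ ≤ (b-a)^3 * ((1/12:ℝ))^(1-1/q) * (1/8*A + 3/8*B)^(1/q)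
          + (b-a)^3 * ((1/12:ℝ))^(1-1/q) * (3/8*A + 1/8*B)^(1/q) := add_le_add p1 p2
      _ = (b-a)^3 * ((1/12:ℝ))^(1-1/q) * ((1/8*A + 3/8*B)^(1/q) + (3/8*A + 1/8*B)^(1/q)) := by
          ring
  calc |∫ x in a..b, ((x-a)*(b-x)) * f'' x| / (2*(b-a))
      ≤ ((b-a)^3 * ((1/12:ℝ))^(1-1/q) * ((1/8*A + 3/8*B)^(1/q) + (3/8*A + 1/8*B)^(1/q)))
          / (2*(b-a)) := by
        exact (div_le_div_iff_of_pos_right (by linarith)).mpr hfinal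
      _ = ((b - a) ^ 2 / 2) * ((1/12 : ℝ)) ^ (1 - 1/q) *
          ((3/8*A + 1/8*B) ^ (1/q) + (1/8*A + 3/8*B) ^ (1/q)) := by
        field_simp
        ring
end

section
/- Let I ⊂ ℝ be an open interval, a, b ∈ I with a < b, f : I → ℝ a twice differentiable mapping such that f'' is integrable on [a,b], let q ≥ 1, and suppose |f''|^q belongs to the Godunova-Levin class Q(I). Then |(1/6)·(f(a) + 4·f((a+b)/2) + f(b)) − (1/(b−a))·∫ₐᵇ f(x) dx| ≤ ((b−a)²/2) · (1/81)^(1 − 1/q) · { ( (5/72)·|f''(a)|^q + ((2/3)·ln(8/9) + 7/72)·|f''(b)|^q )^(1/q) + ( ((2/3)·ln(8/9) + 7/72)·|f''(a)|^q + (5/72)·|f''(b)|^q )^(1/q) }. -/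
open MeasureTheory Set Real
open scoped ENNReal

lemma memLp_aux {μ : Measure ℝ} {g : ℝ → ℝ} {r : ℝ} (hr : 0 < r)
    (hg0 : ∀ x, 0 ≤ g x) (hm : AEStronglyMeasurable g μ)
    (hint : Integrable (fun x => g x ^ r) μ) : MemLp g (ENNReal.ofReal r) μ := by
  have h0 : ENNReal.ofReal r ≠ 0 := by
    simp only [ne_eq, ENNReal.ofReal_eq_zero, not_le]; exact hr
  have htop : ENNReal.ofReal r ≠ ∞ := ENNReal.ofReal_ne_top
  refine (memLp_norm_rpow_iff hm h0 htop).mp ?_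
  rw [ENNReal.div_self h0 htop, ENNReal.toReal_ofReal hr.le, memLp_one_iff_integrable]
  exact hint.congr (Filter.Eventually.of_forall fun x => by
    simp only [Real.norm_eq_abs, abs_of_nonneg (hg0 x)])

lemma holder_aux {s t q : ℝ} (hst : s ≤ t) (hq : 1 ≤ q) (w φ : ℝ → ℝ)
    (hw0 : ∀ x, 0 ≤ w x) (hφ0 : ∀ x, 0 ≤ φ x)
    (hwc : ContinuousOn w (Icc s t))
    (hφm : AEStronglyMeasurable φ (volume.restrict (Ioc s t)))
    (hintq : IntegrableOn (fun x => w x * φ x ^ q) (Ioc s t)) :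
    ∫ x in s..t, w x * φ x
      ≤ (∫ x in s..t, w x) ^ (1 - 1/q) * (∫ x in s..t, w x * φ x ^ q) ^ (1/q) := by
  rcases eq_or_lt_of_le hq with h1 | h1
  · rw [← h1]
    norm_num [Real.rpow_one]
  · set p := q / (q - 1) with hp
    have hpq : p.HolderConjugate q := (Real.HolderConjugate.conjExponent h1).symm
    have hppos : 0 < p := hpq.pos
    have hqpos : 0 < q := hpq.symm.pos
    have hinv : 1/p = 1 - 1/q := by
      have := hpq.inv_add_inv_eq_one
      rw [one_div, one_div]; linarith
    have hsum : 1/p + 1/q = (1:ℝ) := by rw [hinv]; ring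
    have hwInt : IntegrableOn w (Ioc s t) :=
      (hwc.integrableOn_Icc).mono_set Ioc_subset_Icc_self
    have hwSM : AEStronglyMeasurable w (volume.restrict (Ioc s t)) :=
      hwInt.aestronglyMeasurable
    set F := fun x => w x ^ (1/p) with hF
    set G := fun x => w x ^ (1/q) * φ x with hG
    have hFm : AEStronglyMeasurable F (volume.restrict (Ioc s t)) :=
      (hwSM.aemeasurable.pow aemeasurable_const).aestronglyMeasurable
    have hGm : AEStronglyMeasurable G (volume.restrict (Ioc s t)) :=
      ((hwSM.aemeasurable.pow aemeasurable_const).mul hφm.aemeasurable).aestronglyMeasurable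
    have hF0 : ∀ x, 0 ≤ F x := fun x => Real.rpow_nonneg (hw0 x) _
    have hG0 : ∀ x, 0 ≤ G x := fun x => mul_nonneg (Real.rpow_nonneg (hw0 x) _) (hφ0 x)
    have hFp : ∀ x, F x ^ p = w x := by
      intro x
      rw [hF, ← Real.rpow_mul (hw0 x), one_div, inv_mul_cancel₀ (ne_of_gt hppos), Real.rpow_one]
    have hGq : ∀ x, G x ^ q = w x * φ x ^ q := by
      intro x
      rw [hG, Real.mul_rpow (Real.rpow_nonneg (hw0 x) _) (hφ0 x),
        ← Real.rpow_mul (hw0 x), one_div, inv_mul_cancel₀ (ne_of_gt hqpos), Real.rpow_one]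
    have hFG : ∀ x, F x * G x = w x * φ x := by
      intro x
      rw [hF, hG, ← mul_assoc,
        ← Real.rpow_add' (hw0 x) (by rw [hsum]; norm_num), hsum, Real.rpow_one]
    have key := integral_mul_le_Lp_mul_Lq_of_nonneg hpq
      (Filter.Eventually.of_forall hF0) (Filter.Eventually.of_forall hG0)
      (memLp_aux hppos hF0 hFm (hwInt.congr (Filter.Eventually.of_forall fun x => (hFp x).symm)))
      (memLp_aux hqpos hG0 hGm (hintq.congr (Filter.Eventually.of_forall fun x => (hGq x).symm)))
    rw [intervalIntegral.integral_of_le hst, intervalIntegral.integral_of_le hst,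
      intervalIntegral.integral_of_le hst]
    calc ∫ x in Ioc s t, w x * φ x
        = ∫ x in Ioc s t, F x * G x :=
          integral_congr_ae (Filter.Eventually.of_forall fun x => (hFG x).symm)
      _ ≤ (∫ x in Ioc s t, F x ^ p) ^ (1/p) * (∫ x in Ioc s t, G x ^ q) ^ (1/q) := key
      _ = (∫ x in Ioc s t, w x) ^ (1 - 1/q) * (∫ x in Ioc s t, w x * φ x ^ q) ^ (1/q) := by
          rw [integral_congr_ae (Filter.Eventually.of_forall hFp),
            integral_congr_ae (Filter.Eventually.of_forall hGq), hinv]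


lemma intQuad (A C s t : ℝ) : ∫ x in s..t, (x-A)*(x-C)/2
    = (t^3/6 - (A+C)*t^2/4 + A*C*t/2) - (s^3/6 - (A+C)*s^2/4 + A*C*s/2) := by
  apply intervalIntegral.integral_eq_sub_of_hasDerivAt
  · intro x _
    have h := ((((hasDerivAt_pow 3 x).div_const 6).sub
      (((hasDerivAt_pow 2 x).const_mul (A+C)).div_const 4)).add
      (((hasDerivAt_id x).const_mul (A*C)).div_const 2))
    refine h.congr_deriv ?_
    push_cast [id_eq]; ring
  · exact (by fun_prop : Continuous fun x : ℝ => (x-A)*(x-C)/2).intervalIntegrable _ _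

lemma intLin (C s t : ℝ) : ∫ x in s..t, (x-C)/2 = (t-C)^2/4 - (s-C)^2/4 := by
  apply intervalIntegral.integral_eq_sub_of_hasDerivAt
  · intro x _
    have h := (((hasDerivAt_id x).sub_const C).pow 2).div_const 4
    refine h.congr_deriv ?_
    push_cast [id_eq]; ring
  · exact (by fun_prop : Continuous fun x : ℝ => (x-C)/2).intervalIntegrable _ _

lemma intLogB {B s t : ℝ} (c₀ c₁ γ : ℝ) (hst : s ≤ t) (htB : t < B) :
    ∫ x in s..t, (c₀ + c₁*x + γ/(B - x))
      = (c₀*t + c₁*t^2/2 - γ*Real.log (B-t)) - (c₀*s + c₁*s^2/2 - γ*Real.log (B-s)) := by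
  apply intervalIntegral.integral_eq_sub_of_hasDerivAt
  · intro x hx
    rw [uIcc_of_le hst] at hx
    have hxB : x < B := lt_of_le_of_lt hx.2 htB
    have hne : B - x ≠ 0 := sub_ne_zero.mpr hxB.ne'
    have hlog : HasDerivAt (fun y => Real.log (B - y)) ((B-x)⁻¹ * (-1)) x :=
      (Real.hasDerivAt_log hne).comp x ((hasDerivAt_id x).const_sub B)
    have h := (((hasDerivAt_id x).const_mul c₀).add
      (((hasDerivAt_pow 2 x).const_mul c₁).div_const 2)).sub (hlog.const_mul γ)
    refine h.congr_deriv ?_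
    push_cast [id_eq]; field_simp; ring
  · apply ContinuousOn.intervalIntegrable
    rw [uIcc_of_le hst]
    apply ContinuousOn.add (Continuous.continuousOn (by fun_prop))
    exact ContinuousOn.div continuousOn_const
      (Continuous.continuousOn (by fun_prop))
      (fun x hx => sub_ne_zero.mpr (lt_of_le_of_lt hx.2 htB).ne')

lemma intLogA {A s t : ℝ} (c₀ c₁ γ : ℝ) (hst : s ≤ t) (hAs : A < s) :
    ∫ x in s..t, (c₀ + c₁*x + γ/(x - A))
      = (c₀*t + c₁*t^2/2 + γ*Real.log (t-A)) - (c₀*s + c₁*s^2/2 + γ*Real.log (s-A)) := by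
  apply intervalIntegral.integral_eq_sub_of_hasDerivAt
  · intro x hx
    rw [uIcc_of_le hst] at hx
    have hAx : A < x := lt_of_lt_of_le hAs hx.1
    have hne : x - A ≠ 0 := sub_ne_zero.mpr hAx.ne'
    have hlog : HasDerivAt (fun y => Real.log (y - A)) ((x-A)⁻¹ * 1) x :=
      by have := (Real.hasDerivAt_log hne).comp x ((hasDerivAt_id x).sub_const A); exact this
    have h := (((hasDerivAt_id x).const_mul c₀).add
      (((hasDerivAt_pow 2 x).const_mul c₁).div_const 2)).add (hlog.const_mul γ)
    refine h.congr_deriv ?_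
    push_cast [id_eq]; field_simp
  · apply ContinuousOn.intervalIntegrable
    rw [uIcc_of_le hst]
    apply ContinuousOn.add (Continuous.continuousOn (by fun_prop))
    exact ContinuousOn.div continuousOn_const
      (Continuous.continuousOn (by fun_prop))
      (fun x hx => sub_ne_zero.mpr (lt_of_lt_of_le hAs hx.1).ne')


lemma coef_nonneg : 0 ≤ (2:ℝ)/3 * Real.log (8/9) + 7/72 := by
  have h1 : Real.log (9/8) ≤ 1/8 := by
    have := Real.log_le_sub_one_of_pos (show (0:ℝ) < 9/8 by norm_num)
    linarith
  have h2 : Real.log (8/9) = -Real.log (9/8) := by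
    rw [show (8:ℝ)/9 = (9/8)⁻¹ by norm_num, Real.log_inv]
  linarith

lemma half {a b q : ℝ} (hab : a < b) (hq : 1 ≤ q) (φ : ℝ → ℝ) {Ga Gb : ℝ}
    (hφ0 : ∀ x, 0 ≤ φ x) (hGa : 0 ≤ Ga) (hGb : 0 ≤ Gb)
    (hGL : ∀ x ∈ Ioo a b, φ x ^ q ≤ Ga * ((b-a)/(b-x)) + Gb * ((b-a)/(x-a)))
    (hφm : AEStronglyMeasurable φ (volume.restrict (Ioc a ((a+b)/2)))) :
    ∫ x in a..(a+b)/2, |(x-a)*(x-(2*a+b)/3)/2| * φ x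
      ≤ (b-a)^3/2 * ((1:ℝ)/81) ^ (1 - 1/q)
        * (((2:ℝ)/3 * Real.log (8/9) + 7/72)*Ga + (5:ℝ)/72*Gb) ^ (1/q) := by
  have hh : 0 < b - a := by linarith
  have hac : a < (2*a+b)/3 := by linarith
  have hcm : (2*a+b)/3 < (a+b)/2 := by linarith
  have hmb : (a+b)/2 < b := by linarith
  have ham : a ≤ (a+b)/2 := by linarith
  set W : ℝ → ℝ := fun x => |(x-a)*(x-(2*a+b)/3)/2| with hWdef
  have hW0 : ∀ x, 0 ≤ W x := fun x => abs_nonneg _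
  have hWcont : Continuous W := by fun_prop
  -- the weight function written with the absolute value resolved
  have hWneg : ∀ x ∈ Icc a ((2*a+b)/3), W x = -((x-a)*(x-(2*a+b)/3)/2) := by
    intro x hx
    exact abs_of_nonpos (by nlinarith [hx.1, hx.2])
  have hWpos : ∀ x ∈ Icc ((2*a+b)/3) ((a+b)/2), W x = (x-a)*(x-(2*a+b)/3)/2 := by
    intro x hx
    exact abs_of_nonneg (by nlinarith [hx.1, hx.2])
  -- ∫ W = (b-a)^3/162
  have hWint : ∀ s t : ℝ, IntervalIntegrable W volume s t :=
    fun s t => hWcont.intervalIntegrable s t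
  have hA1 : ∫ x in a..(2*a+b)/3, W x = (b-a)^3/324 := by
    rw [intervalIntegral.integral_congr (g := fun x => -((x-a)*(x-(2*a+b)/3)/2))
      (fun x hx => hWneg x (by rwa [uIcc_of_le hac.le] at hx)),
      intervalIntegral.integral_neg, intQuad]
    ring
  have hA2 : ∫ x in ((2*a+b)/3)..((a+b)/2), W x = (b-a)^3/324 := by
    rw [intervalIntegral.integral_congr (g := fun x => (x-a)*(x-(2*a+b)/3)/2)
      (fun x hx => hWpos x (by rwa [uIcc_of_le hcm.le] at hx)),
      intQuad]
    ring
  have hA : ∫ x in a..(a+b)/2, W x = (b-a)^3/162 := by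
    rw [← intervalIntegral.integral_add_adjacent_intervals (b := (2*a+b)/3) (hWint _ _) (hWint _ _),
      hA1, hA2]
    ring
  -- the comparison function R
  set R : ℝ → ℝ := fun x => (Ga*(b-a))*(W x/(b-x)) + (Gb*(b-a))*(|x-(2*a+b)/3|/2) with hRdef
  have hdiv_cont : ContinuousOn (fun x => W x/(b-x)) (Icc a ((a+b)/2)) :=
    ContinuousOn.div hWcont.continuousOn (continuous_const.sub continuous_id).continuousOn
      (fun x hx => ne_of_gt (by linarith [hx.2] : (0:ℝ) < b - x))
  have hRcont : ContinuousOn R (Icc a ((a+b)/2)) :=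
    (continuousOn_const.mul hdiv_cont).add (Continuous.continuousOn (by fun_prop))
  have hR0 : ∀ x ∈ Icc a ((a+b)/2), 0 ≤ R x := by
    intro x hx
    have hbx : (0:ℝ) ≤ b - x := by linarith [hx.2]
    apply add_nonneg
    · exact mul_nonneg (mul_nonneg hGa hh.le) (div_nonneg (hW0 x) hbx)
    · exact mul_nonneg (mul_nonneg hGb hh.le) (by positivity)
  have hWx : ∀ x, a < x → W x = (x-a)*(|x-(2*a+b)/3|/2) := by
    intro x hxa
    rw [hWdef]
    simp only
    rw [abs_div, abs_mul, abs_of_pos (by linarith : (0:ℝ) < x - a)]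
    rw [abs_of_pos (by norm_num : (0:ℝ) < 2)]
    ring
  have hpt : ∀ x ∈ Icc a ((a+b)/2), W x * φ x ^ q ≤ R x := by
    intro x hx
    rcases eq_or_lt_of_le hx.1 with heq | hxa
    · have hWa : W x = 0 := by rw [hWdef, ← heq]; simp
      rw [hWa, zero_mul]; exact hR0 x hx
    · have hxb : x < b := lt_of_le_of_lt hx.2 hmb
      have hne1 : x - a ≠ 0 := ne_of_gt (by linarith)
      have hdivW : W x / (x-a) = |x-(2*a+b)/3|/2 := by
        rw [hWx x hxa, mul_div_cancel_left₀ _ hne1]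
      calc W x * φ x ^ q
          ≤ W x * (Ga*((b-a)/(b-x)) + Gb*((b-a)/(x-a))) :=
            mul_le_mul_of_nonneg_left (hGL x ⟨hxa, hxb⟩) (hW0 x)
        _ = (Ga*(b-a))*(W x/(b-x)) + (Gb*(b-a))*(W x/(x-a)) := by ring
        _ = R x := by rw [hRdef, hdivW]
  have hIntWq : IntegrableOn (fun x => W x * φ x ^ q) (Ioc a ((a+b)/2)) := by
    have hRint : IntegrableOn R (Ioc a ((a+b)/2)) :=
      hRcont.integrableOn_Icc.mono_set Ioc_subset_Icc_self
    have hSM : AEStronglyMeasurable (fun x => W x * φ x ^ q)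
        (volume.restrict (Ioc a ((a+b)/2))) :=
      hWcont.aestronglyMeasurable.mul
        ((hφm.aemeasurable.pow aemeasurable_const).aestronglyMeasurable)
    apply MeasureTheory.Integrable.mono hRint hSM
    rw [ae_restrict_iff' measurableSet_Ioc]
    apply Filter.Eventually.of_forall
    intro x hx
    have hx' : x ∈ Icc a ((a+b)/2) := Ioc_subset_Icc_self hx
    rw [Real.norm_eq_abs, Real.norm_eq_abs,
      abs_of_nonneg (mul_nonneg (hW0 x) (Real.rpow_nonneg (hφ0 x) q)),
      abs_of_nonneg (hR0 x hx')]
    exact hpt x hx'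
  have hIntWq' : IntervalIntegrable (fun x => W x * φ x ^ q) volume a ((a+b)/2) :=
    (intervalIntegrable_iff_integrableOn_Ioc_of_le ham).mpr hIntWq
  have hRii : IntervalIntegrable R volume a ((a+b)/2) := by
    apply ContinuousOn.intervalIntegrable; rwa [uIcc_of_le ham]
  have hT1 : ∫ x in a..(a+b)/2, W x * φ x ^ q ≤ ∫ x in a..(a+b)/2, R x :=
    intervalIntegral.integral_mono_on ham hIntWq' hRii hpt
  -- evaluate ∫ R
  have hJb : ∫ x in a..(a+b)/2, |x-(2*a+b)/3|/2 = 5*(b-a)^2/144 := by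
    have i1 : IntervalIntegrable (fun x => |x-(2*a+b)/3|/2) volume a ((2*a+b)/3) :=
      (by fun_prop : Continuous fun x : ℝ => |x-(2*a+b)/3|/2).intervalIntegrable _ _
    have i2 : IntervalIntegrable (fun x => |x-(2*a+b)/3|/2) volume ((2*a+b)/3) ((a+b)/2) :=
      (by fun_prop : Continuous fun x : ℝ => |x-(2*a+b)/3|/2).intervalIntegrable _ _
    rw [← intervalIntegral.integral_add_adjacent_intervals i1 i2]
    have e1 : ∫ x in a..(2*a+b)/3, |x-(2*a+b)/3|/2 = (b-a)^2/36 := by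
      rw [intervalIntegral.integral_congr (g := fun x => -((x-(2*a+b)/3)/2))
        (fun x hx => by
          rw [uIcc_of_le hac.le] at hx
          rw [abs_of_nonpos (by linarith [hx.2] : x-(2*a+b)/3 ≤ 0)]
          ring),
        intervalIntegral.integral_neg, intLin]
      ring
    have e2 : ∫ x in ((2*a+b)/3)..((a+b)/2), |x-(2*a+b)/3|/2 = (b-a)^2/144 := by
      rw [intervalIntegral.integral_congr (g := fun x => (x-(2*a+b)/3)/2)
        (fun x hx => by
          rw [uIcc_of_le hcm.le] at hx
          rw [abs_of_nonneg (by linarith [hx.1] : (0:ℝ) ≤ x-(2*a+b)/3)]),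
        intLin]
      ring
    rw [e1, e2]; ring
  have p1i : IntervalIntegrable (fun x => W x/(b-x)) volume a ((2*a+b)/3) := by
    apply ContinuousOn.intervalIntegrable
    apply hdiv_cont.mono
    rw [uIcc_of_le hac.le]
    exact Icc_subset_Icc le_rfl hcm.le
  have p2i : IntervalIntegrable (fun x => W x/(b-x)) volume ((2*a+b)/3) ((a+b)/2) := by
    apply ContinuousOn.intervalIntegrable
    apply hdiv_cont.mono
    rw [uIcc_of_le hcm.le]
    exact Icc_subset_Icc hac.le le_rfl
  have hJa : ∫ x in a..(a+b)/2, W x/(b-x)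
      = 7*(b-a)^2/144 + (b-a)^2/3 * Real.log (8/9) := by
    rw [← intervalIntegral.integral_add_adjacent_intervals p1i p2i]
    have e1 : ∫ x in a..(2*a+b)/3, W x/(b-x)
        = 5*(b-a)^2/36 + (b-a)^2/3 * Real.log (2/3) := by
      rw [intervalIntegral.integral_congr
        (g := fun x => (-a/2 + (b-a)/3) + (1/2)*x + (-(b-a)^2/3)/(b - x))
        (fun x hx => by
          rw [uIcc_of_le hac.le] at hx
          have hne : b - x ≠ 0 := ne_of_gt (by linarith [hx.2] : (0:ℝ) < b - x)
          rw [hWneg x hx]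
          field_simp
          ring),
        intLogB _ _ _ hac.le (by linarith : (2*a+b)/3 < b)]
      have hlog : Real.log (b - (2*a+b)/3) = Real.log (b-a) + Real.log (2/3) := by
        rw [show b - (2*a+b)/3 = (b-a)*(2/3) by ring,
          Real.log_mul (ne_of_gt hh) (by norm_num)]
      rw [hlog]; ring
    have e2 : ∫ x in ((2*a+b)/3)..((a+b)/2), W x/(b-x)
        = -13*(b-a)^2/144 + (b-a)^2/3 * Real.log (4/3) := by
      rw [intervalIntegral.integral_congr
        (g := fun x => (a/2 - (b-a)/3) + (-1/2)*x + ((b-a)^2/3)/(b - x))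
        (fun x hx => by
          rw [uIcc_of_le hcm.le] at hx
          have hne : b - x ≠ 0 := ne_of_gt (by linarith [hx.2] : (0:ℝ) < b - x)
          rw [hWpos x hx]
          field_simp
          ring),
        intLogB _ _ _ hcm.le hmb]
      have hlog1 : Real.log (b - (a+b)/2) = Real.log (b-a) + Real.log (1/2) := by
        rw [show b - (a+b)/2 = (b-a)*(1/2) by ring,
          Real.log_mul (ne_of_gt hh) (by norm_num)]
      have hlog2 : Real.log (b - (2*a+b)/3) = Real.log (b-a) + Real.log (2/3) := by
        rw [show b - (2*a+b)/3 = (b-a)*(2/3) by ring,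
          Real.log_mul (ne_of_gt hh) (by norm_num)]
      have hlog3 : Real.log ((4:ℝ)/3) = Real.log (2/3) - Real.log (1/2) := by
        rw [← Real.log_div (by norm_num) (by norm_num)]
        norm_num
      rw [hlog1, hlog2, hlog3]; ring
    have hlog89 : Real.log ((8:ℝ)/9) = Real.log (2/3) + Real.log (4/3) := by
      rw [← Real.log_mul (by norm_num) (by norm_num)]
      norm_num
    rw [e1, e2, hlog89]; ring
  have hRval : ∫ x in a..(a+b)/2, R x
      = (Ga*(b-a))*(7*(b-a)^2/144 + (b-a)^2/3 * Real.log (8/9))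
        + (Gb*(b-a))*(5*(b-a)^2/144) := by
    have i1 : IntervalIntegrable (fun x => (Ga*(b-a))*(W x/(b-x))) volume a ((a+b)/2) := by
      apply IntervalIntegrable.const_mul
      apply ContinuousOn.intervalIntegrable
      rwa [uIcc_of_le ham]
    have i2 : IntervalIntegrable (fun x => (Gb*(b-a))*(|x-(2*a+b)/3|/2)) volume a ((a+b)/2) :=
      (by fun_prop : Continuous fun x : ℝ => (Gb*(b-a))*(|x-(2*a+b)/3|/2)).intervalIntegrable _ _
    rw [hRdef]
    rw [intervalIntegral.integral_add i1 i2, intervalIntegral.integral_const_mul,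
      intervalIntegral.integral_const_mul, hJa, hJb]
  set X : ℝ := ((2:ℝ)/3 * Real.log (8/9) + 7/72)*Ga + (5:ℝ)/72*Gb with hXdef
  have hX0 : 0 ≤ X := add_nonneg (mul_nonneg coef_nonneg hGa) (mul_nonneg (by norm_num) hGb)
  have hTle : ∫ x in a..(a+b)/2, W x * φ x ^ q ≤ (b-a)^3/2 * X := by
    refine hT1.trans (le_of_eq ?_)
    rw [hRval, hXdef]; ring
  have hT0 : 0 ≤ ∫ x in a..(a+b)/2, W x * φ x ^ q :=
    intervalIntegral.integral_nonneg ham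
      (fun x _ => mul_nonneg (hW0 x) (Real.rpow_nonneg (hφ0 x) q))
  calc ∫ x in a..(a+b)/2, W x * φ x
      ≤ (∫ x in a..(a+b)/2, W x) ^ (1 - 1/q) * (∫ x in a..(a+b)/2, W x * φ x ^ q) ^ (1/q) :=
        holder_aux ham hq W φ hW0 hφ0 hWcont.continuousOn hφm hIntWq
    _ ≤ (∫ x in a..(a+b)/2, W x) ^ (1 - 1/q) * ((b-a)^3/2 * X) ^ (1/q) := by
        apply mul_le_mul_of_nonneg_left
          (Real.rpow_le_rpow hT0 hTle (by positivity))
          (Real.rpow_nonneg (by rw [hA]; positivity) _)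
    _ = (b-a)^3/2 * ((1:ℝ)/81) ^ (1 - 1/q) * X ^ (1/q) := by
        rw [hA, Real.mul_rpow (by positivity) hX0,
          show (b-a)^3/162 = ((b-a)^3/2) * (1/81) by ring,
          Real.mul_rpow (by positivity) (by norm_num)]
        have hcollect : ((b-a)^3/2 : ℝ)^(1-1/q) * ((b-a)^3/2)^(1/q) = (b-a)^3/2 := by
          rw [← Real.rpow_add (by positivity), show (1-1/q) + (1/q) = (1:ℝ) by ring,
            Real.rpow_one]
        linear_combination (((1:ℝ)/81) ^ (1 - 1/q) * X ^ (1/q)) * hcollect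


theorem godunova_levin_simpson_power_ineq
    (I : Set ℝ) (hI : IsOpen I) (hI' : I.OrdConnected)
    (a b : ℝ) (ha : a ∈ I) (hb : b ∈ I) (hab : a < b)
    (f f' f'' : ℝ → ℝ)
    (hf' : ∀ x ∈ I, HasDerivAt f (f' x) x)
    (hf'' : ∀ x ∈ I, HasDerivAt f' (f'' x) x)
    (hint : IntervalIntegrable f'' volume a b)
    (q : ℝ) (hq : 1 ≤ q)
    (hQ : GodunovaLevin I (fun x => |f'' x| ^ q)) :
    |(1 / 6) * (f a + 4 * f ((a + b) / 2) + f b) - (1 / (b - a)) * ∫ x in a..b, f x|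
      ≤ ((b - a) ^ 2 / 2) * ((1 / 81 : ℝ)) ^ (1 - 1 / q) *
        (((5 / 72) * |f'' a| ^ q
            + ((2 / 3) * Real.log (8 / 9) + 7 / 72) * |f'' b| ^ q) ^ (1 / q)
          + (((2 / 3) * Real.log (8 / 9) + 7 / 72) * |f'' a| ^ q
            + (5 / 72) * |f'' b| ^ q) ^ (1 / q)) := by
  have hh : 0 < b - a := by linarith
  have hsub : Icc a b ⊆ I := hI'.out ha hb
  have ham : a ≤ (a+b)/2 := by linarith
  have hmb : (a+b)/2 ≤ b := by linarith
  have hmemL : ∀ x ∈ uIcc a ((a+b)/2), x ∈ I := by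
    intro x hx
    rw [uIcc_of_le ham] at hx
    exact hsub ⟨hx.1, le_trans hx.2 hmb⟩
  have hmemR : ∀ x ∈ uIcc ((a+b)/2) b, x ∈ I := by
    intro x hx
    rw [uIcc_of_le hmb] at hx
    exact hsub ⟨le_trans ham hx.1, hx.2⟩
  have hfc : ContinuousOn f I := fun x hx => (hf' x hx).continuousAt.continuousWithinAt
  have hf'c : ContinuousOn f' I := fun x hx => (hf'' x hx).continuousAt.continuousWithinAt
  -- integrabilities
  have hfiL : IntervalIntegrable f volume a ((a+b)/2) :=
    ContinuousOn.intervalIntegrable (hfc.mono hmemL)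
  have hfiR : IntervalIntegrable f volume ((a+b)/2) b :=
    ContinuousOn.intervalIntegrable (hfc.mono hmemR)
  have hf'iL : IntervalIntegrable f' volume a ((a+b)/2) :=
    ContinuousOn.intervalIntegrable (hf'c.mono hmemL)
  have hf'iR : IntervalIntegrable f' volume ((a+b)/2) b :=
    ContinuousOn.intervalIntegrable (hf'c.mono hmemR)
  have hf''iL : IntervalIntegrable f'' volume a ((a+b)/2) :=
    hint.mono_set (by rw [uIcc_of_le ham, uIcc_of_le hab.le]; exact Icc_subset_Icc le_rfl hmb)
  have hf''iR : IntervalIntegrable f'' volume ((a+b)/2) b :=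
    hint.mono_set (by rw [uIcc_of_le hmb, uIcc_of_le hab.le]; exact Icc_subset_Icc ham le_rfl)
  -- integration by parts, left half
  have hP1d : ∀ x : ℝ, HasDerivAt (fun y => (y-a)*(y-(2*a+b)/3)/2) (x - (a + (2*a+b)/3)/2) x := by
    intro x
    have h := (((hasDerivAt_id x).sub_const a).mul
      ((hasDerivAt_id x).sub_const ((2*a+b)/3))).div_const 2
    refine h.congr_deriv ?_
    simp [id_eq]; ring
  have hP1dd : ∀ x : ℝ, HasDerivAt (fun y => y - (a + (2*a+b)/3)/2) (1 : ℝ) x := by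
    intro x
    exact (hasDerivAt_id x).sub_const _
  have ibp1 : ∫ x in a..(a+b)/2, ((x-a)*(x-(2*a+b)/3)/2) * f'' x
      = (((a+b)/2-a)*((a+b)/2-(2*a+b)/3)/2) * f' ((a+b)/2) - ((a-a)*(a-(2*a+b)/3)/2) * f' a
        - ∫ x in a..(a+b)/2, (x - (a + (2*a+b)/3)/2) * f' x :=
    intervalIntegral.integral_mul_deriv_eq_deriv_mul
      (fun x _ => hP1d x) (fun x hx => hf'' x (hmemL x hx))
      ((by fun_prop : Continuous fun x : ℝ => x - (a + (2*a+b)/3)/2).intervalIntegrable _ _)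
      hf''iL
  have ibp2 : ∫ x in a..(a+b)/2, (x - (a + (2*a+b)/3)/2) * f' x
      = ((a+b)/2 - (a + (2*a+b)/3)/2) * f ((a+b)/2) - (a - (a + (2*a+b)/3)/2) * f a
        - ∫ x in a..(a+b)/2, 1 * f x :=
    intervalIntegral.integral_mul_deriv_eq_deriv_mul
      (fun x _ => hP1dd x) (fun x hx => hf' x (hmemL x hx))
      ((by fun_prop : Continuous fun _ : ℝ => (1:ℝ)).intervalIntegrable _ _)
      hf'iL
  -- integration by parts, right half
  have hP2d : ∀ x : ℝ, HasDerivAt (fun y => (y-b)*(y-(a+2*b)/3)/2) (x - (b + (a+2*b)/3)/2) x := by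
    intro x
    have h := (((hasDerivAt_id x).sub_const b).mul
      ((hasDerivAt_id x).sub_const ((a+2*b)/3))).div_const 2
    refine h.congr_deriv ?_
    simp [id_eq]; ring
  have hP2dd : ∀ x : ℝ, HasDerivAt (fun y => y - (b + (a+2*b)/3)/2) (1 : ℝ) x := by
    intro x
    exact (hasDerivAt_id x).sub_const _
  have ibp3 : ∫ x in ((a+b)/2)..b, ((x-b)*(x-(a+2*b)/3)/2) * f'' x
      = ((b-b)*(b-(a+2*b)/3)/2) * f' b - (((a+b)/2-b)*((a+b)/2-(a+2*b)/3)/2) * f' ((a+b)/2)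
        - ∫ x in ((a+b)/2)..b, (x - (b + (a+2*b)/3)/2) * f' x :=
    intervalIntegral.integral_mul_deriv_eq_deriv_mul
      (fun x _ => hP2d x) (fun x hx => hf'' x (hmemR x hx))
      ((by fun_prop : Continuous fun x : ℝ => x - (b + (a+2*b)/3)/2).intervalIntegrable _ _)
      hf''iR
  have ibp4 : ∫ x in ((a+b)/2)..b, (x - (b + (a+2*b)/3)/2) * f' x
      = (b - (b + (a+2*b)/3)/2) * f b - ((a+b)/2 - (b + (a+2*b)/3)/2) * f ((a+b)/2)
        - ∫ x in ((a+b)/2)..b, 1 * f x :=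
    intervalIntegral.integral_mul_deriv_eq_deriv_mul
      (fun x _ => hP2dd x) (fun x hx => hf' x (hmemR x hx))
      ((by fun_prop : Continuous fun _ : ℝ => (1:ℝ)).intervalIntegrable _ _)
      hf'iR
  have one_f1 : ∫ x in a..(a+b)/2, 1 * f x = ∫ x in a..(a+b)/2, f x := by simp
  have one_f2 : ∫ x in ((a+b)/2)..b, 1 * f x = ∫ x in ((a+b)/2)..b, f x := by simp
  have split : (∫ x in a..(a+b)/2, f x) + ∫ x in ((a+b)/2)..b, f x = ∫ x in a..b, f x :=
    intervalIntegral.integral_add_adjacent_intervals hfiL hfiR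
  set S₁ := ∫ x in a..(a+b)/2, ((x-a)*(x-(2*a+b)/3)/2) * f'' x with hS₁
  set S₂ := ∫ x in ((a+b)/2)..b, ((x-b)*(x-(a+2*b)/3)/2) * f'' x with hS₂
  have key2 : S₁ + S₂ = (∫ x in a..b, f x)
      - (b-a)/6*f a - (2*(b-a)/3)*f ((a+b)/2) - (b-a)/6*f b := by
    rw [ibp1, ibp2, ibp3, ibp4, one_f1, one_f2, ← split]
    ring
  have habs : (1 / 6) * (f a + 4 * f ((a + b) / 2) + f b) - (1 / (b - a)) * ∫ x in a..b, f x
      = -(1/(b-a)) * (S₁ + S₂) := by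
    rw [key2]
    field_simp
    try ring
  rw [habs, abs_mul, abs_neg, abs_of_pos (by positivity : (0:ℝ) < 1/(b-a))]
  -- measurability of f''
  have hDm : Measurable (deriv f') := measurable_deriv f'
  have hφmL : AEStronglyMeasurable (fun x => |f'' x|)
      (volume.restrict (Ioc a ((a+b)/2))) := by
    refine hDm.abs.aestronglyMeasurable.congr
      (ae_restrict_of_forall_mem measurableSet_Ioc fun x hx => ?_)
    show |deriv f' x| = |f'' x|
    rw [(hf'' x (hsub ⟨le_of_lt hx.1, le_trans hx.2 hmb⟩)).deriv]
  have hφmR : AEStronglyMeasurable (fun x => |f'' (a+b-x)|)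
      (volume.restrict (Ioc a ((a+b)/2))) := by
    have hreflm : Measurable (fun x : ℝ => a + b - x) := measurable_const.sub measurable_id
    have hcomp : Measurable (fun x => deriv f' (a+b-x)) := hDm.comp hreflm
    refine hcomp.abs.aestronglyMeasurable.congr
      (ae_restrict_of_forall_mem measurableSet_Ioc fun x hx => ?_)
    have hmem : a+b-x ∈ I := hsub ⟨by linarith [hx.2], by linarith [hx.1]⟩
    show |deriv f' (a+b-x)| = |f'' (a+b-x)|
    rw [(hf'' (a+b-x) hmem).deriv]
  -- pointwise Godunova-Levin bound
  have hGLmain : ∀ y ∈ Ioo a b,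
      |f'' y|^q ≤ |f'' a|^q * ((b-a)/(b-y)) + |f'' b|^q * ((b-a)/(y-a)) := by
    intro y hy
    have hl0 : 0 < (b-y)/(b-a) := div_pos (by linarith [hy.2]) hh
    have hl1 : (b-y)/(b-a) < 1 := (div_lt_one hh).mpr (by linarith [hy.1])
    have h2 := hQ.2 a ha b hb ((b-y)/(b-a)) hl0 hl1
    have hxeq : (b-y)/(b-a)*a + (1-(b-y)/(b-a))*b = y := by field_simp; ring
    rw [hxeq] at h2
    refine h2.trans (le_of_eq ?_)
    have h3 : b - y ≠ 0 := ne_of_gt (by linarith [hy.2])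
    have h4 : y - a ≠ 0 := ne_of_gt (by linarith [hy.1])
    rw [show (1:ℝ) - (b-y)/(b-a) = (y-a)/(b-a) by rw [eq_div_iff hh.ne', sub_mul, div_mul_cancel₀ _ hh.ne']; ring]
    field_simp
    try ring
  have habsnn : ∀ x : ℝ, (0:ℝ) ≤ |f'' x| := fun x => abs_nonneg _
  have hrpow_a : (0:ℝ) ≤ |f'' a|^q := Real.rpow_nonneg (abs_nonneg _) q
  have hrpow_b : (0:ℝ) ≤ |f'' b|^q := Real.rpow_nonneg (abs_nonneg _) q
  -- left half bound
  have hB1 : |S₁| ≤ (b-a)^3/2 * ((1:ℝ)/81)^(1-1/q)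
      * (((2:ℝ)/3*Real.log (8/9)+7/72)*|f'' a|^q + (5:ℝ)/72*|f'' b|^q)^(1/q) := by
    have habs1 : |S₁| ≤ ∫ x in a..(a+b)/2, |((x-a)*(x-(2*a+b)/3)/2) * f'' x| :=
      intervalIntegral.abs_integral_le_integral_abs ham
    have hcongr : ∫ x in a..(a+b)/2, |((x-a)*(x-(2*a+b)/3)/2) * f'' x|
        = ∫ x in a..(a+b)/2, |(x-a)*(x-(2*a+b)/3)/2| * |f'' x| :=
      intervalIntegral.integral_congr (fun x _ => abs_mul _ _)
    rw [hcongr] at habs1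
    exact habs1.trans (half hab hq (fun x => |f'' x|) habsnn hrpow_a hrpow_b hGLmain hφmL)
  -- right half bound
  have hB2 : |S₂| ≤ (b-a)^3/2 * ((1:ℝ)/81)^(1-1/q)
      * (((2:ℝ)/3*Real.log (8/9)+7/72)*|f'' b|^q + (5:ℝ)/72*|f'' a|^q)^(1/q) := by
    have habs2 : |S₂| ≤ ∫ x in ((a+b)/2)..b, |((x-b)*(x-(a+2*b)/3)/2) * f'' x| :=
      intervalIntegral.abs_integral_le_integral_abs hmb
    have hcongr2 : ∫ x in ((a+b)/2)..b, |((x-b)*(x-(a+2*b)/3)/2) * f'' x|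
        = ∫ x in ((a+b)/2)..b, |(x-b)*(x-(a+2*b)/3)/2| * |f'' x| :=
      intervalIntegral.integral_congr (fun x _ => abs_mul _ _)
    have hrefl := intervalIntegral.integral_comp_sub_left (a := a) (b := (a+b)/2)
      (fun y => |(y-b)*(y-(a+2*b)/3)/2| * |f'' y|) (a+b)
    rw [show a+b-(a+b)/2 = (a+b)/2 by ring, show a+b-a = b by ring] at hrefl
    have hcongr3 : ∫ x in a..(a+b)/2, |((a+b-x)-b)*((a+b-x)-(a+2*b)/3)/2| * |f'' (a+b-x)|
        = ∫ x in a..(a+b)/2, |(x-a)*(x-(2*a+b)/3)/2| * |f'' (a+b-x)| :=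
      intervalIntegral.integral_congr (fun x _ => by
        rw [show ((a+b-x)-b)*((a+b-x)-(a+2*b)/3)/2 = (x-a)*(x-(2*a+b)/3)/2 from by ring])
    have hGL2 : ∀ x ∈ Ioo a b,
        |f'' (a+b-x)|^q ≤ |f'' b|^q * ((b-a)/(b-x)) + |f'' a|^q * ((b-a)/(x-a)) := by
      intro x hx
      have h3 := hGLmain (a+b-x) ⟨by linarith [hx.2], by linarith [hx.1]⟩
      rw [show b-(a+b-x) = x-a by ring, show a+b-x-a = b-x by ring] at h3
      linarith
    have hhalf2 := half hab hq (fun x => |f'' (a+b-x)|)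
      (fun x => abs_nonneg _) hrpow_b hrpow_a hGL2 hφmR
    rw [hcongr2, ← hrefl, hcongr3] at habs2
    exact habs2.trans hhalf2
  calc 1/(b-a) * |S₁ + S₂|
      ≤ 1/(b-a) * (|S₁| + |S₂|) :=
        mul_le_mul_of_nonneg_left (abs_add_le _ _) (by positivity)
    _ ≤ 1/(b-a) * (((b-a)^3/2 * ((1:ℝ)/81)^(1-1/q)
          * (((2:ℝ)/3*Real.log (8/9)+7/72)*|f'' a|^q + (5:ℝ)/72*|f'' b|^q)^(1/q))
        + ((b-a)^3/2 * ((1:ℝ)/81)^(1-1/q)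
          * (((2:ℝ)/3*Real.log (8/9)+7/72)*|f'' b|^q + (5:ℝ)/72*|f'' a|^q)^(1/q))) :=
        mul_le_mul_of_nonneg_left (add_le_add hB1 hB2) (by positivity)
    _ = (b - a) ^ 2 / 2 * (1 / 81) ^ (1 - 1 / q) *
        ((5 / 72 * |f'' a| ^ q + (2 / 3 * Real.log (8 / 9) + 7 / 72) * |f'' b| ^ q) ^ (1 / q) +
          ((2 / 3 * Real.log (8 / 9) + 7 / 72) * |f'' a| ^ q + 5 / 72 * |f'' b| ^ q) ^ (1 / q)) := by
        rw [show ((5:ℝ) / 72 * |f'' a| ^ q + (2 / 3 * Real.log (8 / 9) + 7 / 72) * |f'' b| ^ q)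
            = ((2:ℝ)/3*Real.log (8/9)+7/72)*|f'' b|^q + (5:ℝ)/72*|f'' a|^q from by ring,
          show ((2:ℝ) / 3 * Real.log (8 / 9) + 7 / 72) * |f'' a| ^ q + 5 / 72 * |f'' b| ^ q
            = ((2:ℝ)/3*Real.log (8/9)+7/72)*|f'' a|^q + (5:ℝ)/72*|f'' b|^q from by ring]
        field_simp
        ring
end

section
/- Let a < b be real numbers, let f : [a,b] → ℝ be nonnegative and integrable, let 0 ≤ λ ≤ 1/2, and suppose g : (0,1) → ℝ satisfies g(t) ≤ A/t + B/(1−t) for nonnegative constants A, B (here g(t) = |f''(t·a + (1−t)·b)|^q with A = |f''(a)|^q, B = |f''(b)|^q in the application). Then ∫₀^{1/2} |t·(t−λ)|·g(t) dt ≤ [λ² − (4λ−1)/8]·A + [(1−λ)·ln(2(1−λ)²) + (20λ − 8λ² − 5)/8]·B. -/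
open MeasureTheory Set Real

lemma Gaux_deriv (lam t : ℝ) (ht : t < 1) :
    HasDerivAt (fun s : ℝ => -(1-s)^2/2 + (2-lam)*(1-s) - (1-lam)*Real.log (1-s))
      (t*(t-lam)/(1-t)) t := by
  have h1 : (1:ℝ) - t ≠ 0 := by linarith
  have hu : HasDerivAt (fun s : ℝ => 1 - s) (-1) t := by
    simpa using (hasDerivAt_id t).const_sub 1
  have h2 := (((hu.pow 2).neg.div_const 2).add (hu.const_mul (2-lam))).sub
      ((hu.log h1).const_mul (1-lam))
  refine h2.congr_deriv ?_
  field_simp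
  ring

lemma int_tt (lam p q : ℝ) (hpq : p ≤ q) (hq : q < 1) :
    ∫ t in p..q, t*(t-lam)/(1-t)
      = (-(1-q)^2/2 + (2-lam)*(1-q) - (1-lam)*Real.log (1-q))
        - (-(1-p)^2/2 + (2-lam)*(1-p) - (1-lam)*Real.log (1-p)) := by
  have h1 : ∀ t ∈ uIcc p q,
      HasDerivAt (fun s : ℝ => -(1-s)^2/2 + (2-lam)*(1-s) - (1-lam)*Real.log (1-s))
        (t*(t-lam)/(1-t)) t := by
    intro t ht
    rw [uIcc_of_le hpq] at ht
    exact Gaux_deriv lam t (lt_of_le_of_lt ht.2 hq)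
  have h2 : IntervalIntegrable (fun t => t*(t-lam)/(1-t)) volume p q := by
    apply ContinuousOn.intervalIntegrable
    apply ContinuousOn.div (by fun_prop) (by fun_prop)
    intro t ht
    rw [uIcc_of_le hpq] at ht
    have : t < 1 := lt_of_le_of_lt ht.2 hq
    intro h; linarith [h]
  exact intervalIntegral.integral_eq_sub_of_hasDerivAt h1 h2

lemma intA (lam : ℝ) (h0 : 0 ≤ lam) (h1 : lam ≤ 1/2) :
    ∫ t in (0:ℝ)..(1/2), |t - lam| = lam^2 - (4*lam - 1)/8 := by
  have hi1 : IntervalIntegrable (fun t => |t - lam|) volume 0 lam := by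
    apply ContinuousOn.intervalIntegrable; fun_prop
  have hi2 : IntervalIntegrable (fun t => |t - lam|) volume lam (1/2) := by
    apply ContinuousOn.intervalIntegrable; fun_prop
  rw [← intervalIntegral.integral_add_adjacent_intervals hi1 hi2]
  have e1 : ∫ t in (0:ℝ)..lam, |t - lam| = ∫ t in (0:ℝ)..lam, (lam - t) := by
    apply intervalIntegral.integral_congr
    intro t ht
    rw [uIcc_of_le h0] at ht
    show |t - lam| = lam - t
    rw [abs_of_nonpos (by linarith [ht.2])]; ring
  have e2 : ∫ t in lam..(1/2:ℝ), |t - lam| = ∫ t in lam..(1/2:ℝ), (t - lam) := by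
    apply intervalIntegral.integral_congr
    intro t ht
    rw [uIcc_of_le h1] at ht
    show |t - lam| = t - lam
    rw [abs_of_nonneg (by linarith [ht.1])]
  rw [e1, e2,
      intervalIntegral.integral_sub intervalIntegrable_const intervalIntegral.intervalIntegrable_id,
      intervalIntegral.integral_sub intervalIntegral.intervalIntegrable_id intervalIntegrable_const]
  simp [integral_id]
  ring
lemma intB (lam : ℝ) (h0 : 0 ≤ lam) (h1 : lam ≤ 1/2) :
    ∫ t in (0:ℝ)..(1/2), t * |t - lam| / (1 - t)
      = (1 - lam) * Real.log (2 * (1 - lam) ^ 2) + (20 * lam - 8 * lam ^ 2 - 5) / 8 := by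
  have hcont : ∀ p q : ℝ, p ≤ q → q ≤ 1/2 →
      IntervalIntegrable (fun t => t * |t - lam| / (1 - t)) volume p q := by
    intro p q hpq hq
    apply ContinuousOn.intervalIntegrable
    apply ContinuousOn.div (by fun_prop) (by fun_prop)
    intro t ht
    rw [uIcc_of_le hpq] at ht
    have : t ≤ 1/2 := le_trans ht.2 hq
    intro h; linarith [h]
  rw [← intervalIntegral.integral_add_adjacent_intervals (hcont 0 lam h0 h1)
        (hcont lam (1/2) h1 le_rfl)]
  have e1 : ∫ t in (0:ℝ)..lam, t * |t - lam| / (1 - t)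
      = - ∫ t in (0:ℝ)..lam, t*(t-lam)/(1-t) := by
    rw [← intervalIntegral.integral_neg]
    apply intervalIntegral.integral_congr
    intro t ht
    rw [uIcc_of_le h0] at ht
    show t * |t - lam| / (1 - t) = -(t*(t-lam)/(1-t))
    rw [abs_of_nonpos (by linarith [ht.2])]; ring
  have e2 : ∫ t in lam..(1/2:ℝ), t * |t - lam| / (1 - t)
      = ∫ t in lam..(1/2:ℝ), t*(t-lam)/(1-t) := by
    apply intervalIntegral.integral_congr
    intro t ht
    rw [uIcc_of_le h1] at ht
    show t * |t - lam| / (1 - t) = t*(t-lam)/(1-t)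
    rw [abs_of_nonneg (by linarith [ht.1])]
  rw [e1, e2, int_tt lam 0 lam h0 (by linarith), int_tt lam lam (1/2) h1 (by norm_num)]
  have hl2 : Real.log (1 - 1/2 : ℝ) = -Real.log 2 := by
    rw [show (1-1/2:ℝ) = 2⁻¹ by norm_num, Real.log_inv]
  have hlt : Real.log (2*(1-lam)^2) = Real.log 2 + 2*Real.log (1-lam) := by
    rw [Real.log_mul two_ne_zero (pow_ne_zero 2 (ne_of_gt (by linarith : (0:ℝ) < 1 - lam))), Real.log_pow]
    push_cast; ring
  rw [hl2, hlt]
  norm_num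
  ring
theorem kernel_integral_bound_left_first_case
    (a b : ℝ) (hab : a < b)
    (f : ℝ → ℝ) (hf0 : ∀ x ∈ Icc a b, 0 ≤ f x)
    (hfint : IntervalIntegrable f volume a b)
    (lam : ℝ) (hlam0 : 0 ≤ lam) (hlam1 : lam ≤ 1 / 2)
    (g : ℝ → ℝ) (hg : Measurable g) (hg0 : ∀ t ∈ Ioo (0 : ℝ) 1, 0 ≤ g t)
    (A B : ℝ) (hA : 0 ≤ A) (hB : 0 ≤ B)
    (hgb : ∀ t ∈ Ioo (0 : ℝ) 1, g t ≤ A / t + B / (1 - t)) :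
    (∫ t in (0 : ℝ)..(1 / 2), |t * (t - lam)| * g t)
      ≤ (lam ^ 2 - (4 * lam - 1) / 8) * A
        + ((1 - lam) * Real.log (2 * (1 - lam) ^ 2)
            + (20 * lam - 8 * lam ^ 2 - 5) / 8) * B := by
  set k : ℝ → ℝ := fun t => A * |t - lam| + B * (t * |t - lam| / (1 - t)) with hk
  -- pointwise bound on (0, 1/2]
  have key : ∀ t, 0 < t → t ≤ 1/2 → |t * (t - lam)| * g t ≤ k t := by
    intro t ht0 ht2
    have ht1 : t < 1 := by linarith
    have hgt := hgb t ⟨ht0, ht1⟩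
    have habs : |t * (t - lam)| = t * |t - lam| := by
      rw [abs_mul, abs_of_pos ht0]
    have h1t : (0:ℝ) < 1 - t := by linarith
    calc |t * (t - lam)| * g t
        ≤ |t * (t - lam)| * (A / t + B / (1 - t)) :=
          mul_le_mul_of_nonneg_left hgt (abs_nonneg _)
      _ = k t := by
          rw [habs, hk]
          field_simp
  have hkint : IntervalIntegrable k volume 0 (1/2) := by
    apply ContinuousOn.intervalIntegrable
    apply ContinuousOn.add (by fun_prop)
    apply ContinuousOn.mul continuousOn_const
    apply ContinuousOn.div (by fun_prop) (by fun_prop)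
    intro t ht
    rw [uIcc_of_le (by norm_num : (0:ℝ) ≤ 1/2)] at ht
    intro h; have := ht.2; norm_num at h; linarith
  -- bound for k
  have kbound : ∀ t, 0 < t → t ≤ 1/2 → k t ≤ A + B := by
    intro t ht0 ht2
    have h1t : (1:ℝ)/2 ≤ 1 - t := by linarith
    have habs : |t - lam| ≤ 1/2 := by
      rw [abs_le]; constructor <;> linarith
    have hB2 : t * |t - lam| / (1 - t) ≤ 1 := by
      rw [div_le_one (by linarith)]
      nlinarith [abs_nonneg (t - lam)]
    have hA2 : A * |t - lam| ≤ A := by nlinarith [abs_nonneg (t - lam)]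
    have := mul_le_mul_of_nonneg_left hB2 hB
    simp only [hk]; nlinarith
  have hLint : IntervalIntegrable (fun t => |t * (t - lam)| * g t) volume 0 (1/2) := by
    rw [intervalIntegrable_iff_integrableOn_Ioc_of_le (by norm_num)]
    apply Integrable.mono' (g := fun _ => A + B) (integrable_const (A + B))
    · exact (((measurable_id.mul (measurable_id.sub measurable_const)).abs.mul hg)).aestronglyMeasurable
    · filter_upwards [ae_restrict_mem measurableSet_Ioc] with t ht
      obtain ⟨ht0, ht2⟩ := ht
      have ht1 : t < 1 := by linarith
      have hg0t := hg0 t ⟨ht0, ht1⟩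
      rw [Real.norm_eq_abs, abs_of_nonneg (mul_nonneg (abs_nonneg _) hg0t)]
      exact le_trans (key t ht0 ht2) (kbound t ht0 ht2)
  have hmono : (∫ t in (0:ℝ)..(1/2), |t * (t - lam)| * g t) ≤ ∫ t in (0:ℝ)..(1/2), k t := by
    apply intervalIntegral.integral_mono_on (by norm_num) hLint hkint
    intro t ht
    rcases eq_or_lt_of_le ht.1 with h | h
    · rw [← h]
      simp only [hk]
      have : |(0:ℝ) * (0 - lam)| * g 0 = 0 := by simp
      rw [this]
      positivity
    · exact key t h ht.2
  have hi1 : IntervalIntegrable (fun t => A * |t - lam|) volume 0 (1/2) := by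
    apply ContinuousOn.intervalIntegrable; fun_prop
  have hi2 : IntervalIntegrable (fun t => B * (t * |t - lam| / (1 - t))) volume 0 (1/2) := by
    apply ContinuousOn.intervalIntegrable
    apply ContinuousOn.mul continuousOn_const
    apply ContinuousOn.div (by fun_prop) (by fun_prop)
    intro t ht
    rw [uIcc_of_le (by norm_num : (0:ℝ) ≤ 1/2)] at ht
    intro h; have := ht.2; linarith [h]
  have hksplit : (∫ t in (0:ℝ)..(1/2), k t)
      = A * (∫ t in (0:ℝ)..(1/2), |t - lam|)
        + B * (∫ t in (0:ℝ)..(1/2), t * |t - lam| / (1 - t)) := by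
    rw [hk]
    rw [intervalIntegral.integral_add hi1 hi2,
        intervalIntegral.integral_const_mul, intervalIntegral.integral_const_mul]
  refine le_trans hmono ?_
  rw [hksplit, intA lam hlam0 hlam1, intB lam hlam0 hlam1]
  ring_nf
  linarith [le_refl (0:ℝ)]
end

section
/- Let 0 ≤ λ ≤ 1/2 and suppose g : (0,1) → ℝ is nonnegative, measurable, and satisfies g(t) ≤ A/t + B/(1−t) for all t ∈ (0,1), where A, B ≥ 0 are constants. Then ∫_{1/2}^{1} |(1−t)·(1−λ−t)|·g(t) dt ≤ [(1−λ)·ln(2(1−λ)²) + (20λ − 8λ² − 5)/8]·A + [λ² − (4λ−1)/8]·B. -/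
open MeasureTheory Set Real

theorem kernel_integral_bound_right_first_case
    (lam : ℝ) (hlam0 : 0 ≤ lam) (hlam1 : lam ≤ 1 / 2)
    (g : ℝ → ℝ) (hg : Measurable g) (hg0 : ∀ t ∈ Ioo (0 : ℝ) 1, 0 ≤ g t)
    (A B : ℝ) (hA : 0 ≤ A) (hB : 0 ≤ B)
    (hgb : ∀ t ∈ Ioo (0 : ℝ) 1, g t ≤ A / t + B / (1 - t)) :
    (∫ t in (1 / 2 : ℝ)..1, |(1 - t) * (1 - lam - t)| * g t)
      ≤ ((1 - lam) * Real.log (2 * (1 - lam) ^ 2)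
            + (20 * lam - 8 * lam ^ 2 - 5) / 8) * A
        + (lam ^ 2 - (4 * lam - 1) / 8) * B := by
  set c : ℝ := 1 - lam with hcdef
  have hc0 : (0:ℝ) < c := by rw [hcdef]; linarith
  have hch : (1/2 : ℝ) ≤ c := by rw [hcdef]; linarith
  have hc1 : c ≤ 1 := by rw [hcdef]; linarith
  set F : ℝ → ℝ := fun t => A * ((1 - t) * |c - t| / t) + B * |c - t| with hFdef
  -- continuity of F on [1/2, 1]
  have hFcont : ContinuousOn F (Icc (1/2 : ℝ) 1) := by
    apply ContinuousOn.add
    · apply ContinuousOn.mul continuousOn_const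
      apply ContinuousOn.div
      · exact ((continuous_const.sub continuous_id).mul
          ((continuous_const.sub continuous_id).abs)).continuousOn
      · exact continuousOn_id
      · intro t ht; exact ne_of_gt (lt_of_lt_of_le (by norm_num) ht.1)
    · exact (continuous_const.mul (continuous_const.sub continuous_id).abs).continuousOn
  have hFint : IntervalIntegrable F volume (1/2) 1 :=
    (hFcont.mono (by rw [uIcc_of_le (by norm_num : (1/2:ℝ) ≤ 1)])).intervalIntegrable
  -- pointwise bound
  have hbd : ∀ t ∈ Icc (1/2:ℝ) 1, |(1 - t) * (c - t)| * g t ≤ F t := by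
    intro t ht
    have ht0 : (0:ℝ) < t := lt_of_lt_of_le (by norm_num) ht.1
    rcases eq_or_lt_of_le ht.2 with h1 | h1
    · rw [h1]
      simp only [hFdef, sub_self, zero_mul, abs_zero, mul_zero]
      positivity
    · have htI : t ∈ Ioo (0:ℝ) 1 := ⟨ht0, h1⟩
      have h1t : (0:ℝ) < 1 - t := by linarith
      have hgle := hgb t htI
      have hgn := hg0 t htI
      have habs : |(1 - t) * (c - t)| = (1 - t) * |c - t| := by
        rw [abs_mul, abs_of_pos h1t]
      rw [habs]
      calc (1 - t) * |c - t| * g t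
          ≤ (1 - t) * |c - t| * (A / t + B / (1 - t)) := by
            apply mul_le_mul_of_nonneg_left hgle; positivity
        _ = F t := by
            simp only [hFdef]
            field_simp
  -- integrability of LHS integrand
  have hGint : IntervalIntegrable (fun t => |(1 - t) * (c - t)| * g t) volume (1/2) 1 := by
    apply hFint.mono_fun
    · exact ((((measurable_const.sub measurable_id).mul
        (measurable_const.sub measurable_id)).abs).mul hg).aestronglyMeasurable
    · rw [Filter.EventuallyLE, uIoc_of_le (by norm_num : (1/2:ℝ) ≤ 1)]
      refine (ae_restrict_iff' measurableSet_Ioc).2 (Filter.Eventually.of_forall ?_)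
      intro t ht
      have ht0 : (0:ℝ) < t := lt_of_lt_of_le (by norm_num) ht.1.le
      have htm : t ∈ Icc (1/2:ℝ) 1 := ⟨ht.1.le, ht.2⟩
      rcases eq_or_lt_of_le ht.2 with h1 | h1
      · simp only [Real.norm_eq_abs, h1, sub_self, zero_mul, abs_zero, zero_mul]
        positivity
      · have hgn := hg0 t ⟨ht0, h1⟩
        have hb := hbd t htm
        calc ‖|(1 - t) * (c - t)| * g t‖ = |(1 - t) * (c - t)| * g t := by
              rw [Real.norm_eq_abs, abs_mul, abs_abs, abs_of_nonneg hgn]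
          _ ≤ F t := hb
          _ ≤ ‖F t‖ := le_abs_self _
  -- main comparison
  have hmain : (∫ t in (1/2:ℝ)..1, |(1 - t) * (c - t)| * g t) ≤ ∫ t in (1/2:ℝ)..1, F t :=
    intervalIntegral.integral_mono_on (by norm_num) hGint hFint hbd
  -- split the integral of F
  have hsub1 : uIcc (1/2:ℝ) c ⊆ uIcc (1/2:ℝ) 1 := by
    rw [uIcc_of_le hch, uIcc_of_le (by norm_num : (1/2:ℝ) ≤ 1)]
    exact Icc_subset_Icc le_rfl hc1
  have hsub2 : uIcc c 1 ⊆ uIcc (1/2:ℝ) 1 := by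
    rw [uIcc_of_le hc1, uIcc_of_le (by norm_num : (1/2:ℝ) ≤ 1)]
    exact Icc_subset_Icc hch le_rfl
  have hsplit : (∫ t in (1/2:ℝ)..1, F t)
      = (∫ t in (1/2:ℝ)..c, F t) + ∫ t in c..1, F t :=
    (intervalIntegral.integral_add_adjacent_intervals
      (hFint.mono_set hsub1) (hFint.mono_set hsub2)).symm
  -- first piece
  set H1 : ℝ → ℝ := fun t => A*(c*Real.log t - (1+c)*t + t^2/2) + B*(c*t - t^2/2) with hH1
  have hI1 : (∫ t in (1/2:ℝ)..c, F t) = H1 c - H1 (1/2) := by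
    rw [intervalIntegral.integral_congr
      (g := fun t => A*(c*t⁻¹ - (1+c) + t) + B*(c - t)) ?_]
    · apply intervalIntegral.integral_eq_sub_of_hasDerivAt
      · intro t ht
        rw [uIcc_of_le hch] at ht
        have ht0 : (0:ℝ) < t := lt_of_lt_of_le (by norm_num) ht.1
        have hlog : HasDerivAt (fun t : ℝ => c * Real.log t) (c * t⁻¹) t :=
          (Real.hasDerivAt_log ht0.ne').const_mul c
        have hid : HasDerivAt (fun t : ℝ => t) 1 t := hasDerivAt_id t
        have hsq : HasDerivAt (fun t : ℝ => t^2/2) t t := by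
          simpa using (hasDerivAt_pow 2 t).div_const 2
        have h1 := ((hlog.sub (hid.const_mul (1+c))).add hsq).const_mul A
        have h2 := ((hid.const_mul c).sub hsq).const_mul B
        rw [hH1]
        convert h1.add h2 using 1
        · funext y; simp only [Pi.add_apply, Pi.sub_apply]
        · ring
      · apply ContinuousOn.intervalIntegrable
        rw [uIcc_of_le hch]
        apply ContinuousOn.add
        · apply continuousOn_const.mul
          apply ContinuousOn.add
          · apply ContinuousOn.sub _ continuousOn_const
            apply continuousOn_const.mul
            exact ContinuousOn.inv₀ continuousOn_id
              (fun t ht => ne_of_gt (lt_of_lt_of_le (by norm_num) ht.1))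
          · exact continuousOn_id
        · exact continuousOn_const.mul (continuousOn_const.sub continuousOn_id)
    · intro t ht
      rw [uIcc_of_le hch] at ht
      have ht0 : (0:ℝ) < t := lt_of_lt_of_le (by norm_num) ht.1
      have habs : |c - t| = c - t := abs_of_nonneg (by linarith [ht.2])
      have key : (1 - t) * (c - t) / t = c*t⁻¹ - (1+c) + t := by
        field_simp; ring
      simp only [hFdef, habs, key]
  -- second piece
  set H2 : ℝ → ℝ := fun t => A*((1+c)*t - c*Real.log t - t^2/2) + B*(t^2/2 - c*t) with hH2
  have hI2 : (∫ t in c..1, F t) = H2 1 - H2 c := by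
    rw [intervalIntegral.integral_congr
      (g := fun t => A*((1+c) - c*t⁻¹ - t) + B*(t - c)) ?_]
    · apply intervalIntegral.integral_eq_sub_of_hasDerivAt
      · intro t ht
        rw [uIcc_of_le hc1] at ht
        have ht0 : (0:ℝ) < t := lt_of_lt_of_le hc0 ht.1
        have hlog : HasDerivAt (fun t : ℝ => c * Real.log t) (c * t⁻¹) t :=
          (Real.hasDerivAt_log ht0.ne').const_mul c
        have hid : HasDerivAt (fun t : ℝ => t) 1 t := hasDerivAt_id t
        have hsq : HasDerivAt (fun t : ℝ => t^2/2) t t := by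
          simpa using (hasDerivAt_pow 2 t).div_const 2
        have h1 := (((hid.const_mul (1+c)).sub hlog).sub hsq).const_mul A
        have h2 := ((hsq).sub (hid.const_mul c)).const_mul B
        rw [hH2]
        convert h1.add h2 using 1
        · funext y; simp only [Pi.add_apply, Pi.sub_apply]
        · ring
      · apply ContinuousOn.intervalIntegrable
        rw [uIcc_of_le hc1]
        apply ContinuousOn.add
        · apply continuousOn_const.mul
          apply ContinuousOn.sub _ continuousOn_id
          apply ContinuousOn.sub continuousOn_const
          apply continuousOn_const.mul
          exact ContinuousOn.inv₀ continuousOn_id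
            (fun t ht => ne_of_gt (lt_of_lt_of_le hc0 ht.1))
        · exact continuousOn_const.mul (continuousOn_id.sub continuousOn_const)
    · intro t ht
      rw [uIcc_of_le hc1] at ht
      have ht0 : (0:ℝ) < t := lt_of_lt_of_le hc0 ht.1
      have habs : |c - t| = t - c := by
        rw [abs_sub_comm]; exact abs_of_nonneg (by linarith [ht.1])
      have key : (1 - t) * (t - c) / t = (1+c) - c*t⁻¹ - t := by
        field_simp; ring
      simp only [hFdef, habs, key]
  -- final algebra
  have hlog2 : Real.log (2 * c^2) = Real.log 2 + 2 * Real.log c := by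
    rw [Real.log_mul (by norm_num) (pow_ne_zero 2 hc0.ne'), Real.log_pow]
    norm_num
  have hloghalf : Real.log ((1:ℝ)/2) = - Real.log 2 := by
    rw [one_div, Real.log_inv]
  calc (∫ t in (1/2:ℝ)..1, |(1 - t) * (c - t)| * g t)
      ≤ ∫ t in (1/2:ℝ)..1, F t := hmain
    _ = (∫ t in (1/2:ℝ)..c, F t) + ∫ t in c..1, F t := hsplit
    _ = (c * Real.log (2 * c ^ 2) + (20 * lam - 8 * lam ^ 2 - 5) / 8) * A
        + (lam ^ 2 - (4 * lam - 1) / 8) * B := by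
        rw [hI1, hI2]
        simp only [hH1, hH2]
        rw [hlog2, hloghalf, Real.log_one, hcdef]
        ring
end

section
/- Let 1/2 ≤ λ ≤ 1 and suppose g : (0,1) → ℝ is nonnegative, measurable, and satisfies g(t) ≤ A/t + B/(1−t) for all t ∈ (0,1), where A, B ≥ 0 are constants. Then ∫₀^{1/2} |t·(t−λ)|·g(t) dt ≤ ((4λ−1)/8)·A + [(5−4λ)/8 − (λ−1)·ln(1/2)]·B. -/
open MeasureTheory Set Real

theorem kernel_integral_bound_left_second_case
    (lam : ℝ) (hlam0 : 1 / 2 ≤ lam) (hlam1 : lam ≤ 1)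
    (g : ℝ → ℝ) (hg : Measurable g) (hg0 : ∀ t ∈ Ioo (0 : ℝ) 1, 0 ≤ g t)
    (A B : ℝ) (hA : 0 ≤ A) (hB : 0 ≤ B)
    (hgb : ∀ t ∈ Ioo (0 : ℝ) 1, g t ≤ A / t + B / (1 - t)) :
    (∫ t in (0 : ℝ)..(1 / 2), |t * (t - lam)| * g t)
      ≤ ((4 * lam - 1) / 8) * A
        + ((5 - 4 * lam) / 8 - (lam - 1) * Real.log (1 / 2)) * B := by
  set G : ℝ → ℝ := fun t => A * (lam - t) + B * (t + (1 - lam) - (1 - lam) / (1 - t)) with hGdef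
  set H : ℝ → ℝ := fun t => A * (lam * t - t ^ 2 / 2)
      + B * (t ^ 2 / 2 + (1 - lam) * t + (1 - lam) * Real.log (1 - t)) with hHdef
  have hcont : ContinuousOn G (Icc (0:ℝ) (1/2)) := by
    apply ContinuousOn.add
    · exact continuousOn_const.mul (continuousOn_const.sub continuousOn_id)
    · apply continuousOn_const.mul
      apply ContinuousOn.sub (continuousOn_id.add continuousOn_const)
      apply ContinuousOn.div continuousOn_const (continuousOn_const.sub continuousOn_id)
      intro t ht
      have := ht.2
      simp only [Pi.sub_apply, id_eq]
      intro h
      simp only [Icc, mem_setOf_eq] at ht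
      nlinarith [ht.2]
  have hGint : IntervalIntegrable G volume 0 (1/2) := by
    apply ContinuousOn.intervalIntegrable
    rwa [uIcc_of_le (by norm_num : (0:ℝ) ≤ 1/2)]
  have hbound : ∀ t ∈ Icc (0:ℝ) (1/2), |t * (t - lam)| * g t ≤ G t := by
    intro t ht
    rcases eq_or_lt_of_le ht.1 with h0 | h0
    · subst h0
      have : G 0 = A * lam := by norm_num [hGdef]
      rw [this]
      simp only [zero_mul, abs_zero]
      nlinarith
    · have ht1 : t < 1 := lt_of_le_of_lt ht.2 (by norm_num)
      have hmem : t ∈ Ioo (0:ℝ) 1 := ⟨h0, ht1⟩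
      have h1 : |t * (t - lam)| = t * (lam - t) := by
        rw [abs_of_nonpos (by nlinarith [ht.2])]
        ring
      rw [h1]
      have hnn : (0:ℝ) ≤ t * (lam - t) := by nlinarith [ht.2]
      have h2 : t * (lam - t) * g t ≤ t * (lam - t) * (A / t + B / (1 - t)) :=
        mul_le_mul_of_nonneg_left (hgb t hmem) hnn
      refine h2.trans (le_of_eq ?_)
      have htne : t ≠ 0 := ne_of_gt h0
      have h1t : (1:ℝ) - t ≠ 0 := by intro h; nlinarith [ht.2]
      simp only [hGdef]
      field_simp
      ring
  have hFint : IntervalIntegrable (fun t => |t * (t - lam)| * g t) volume 0 (1/2) := by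
    rw [intervalIntegrable_iff_integrableOn_Ioc_of_le (by norm_num : (0:ℝ) ≤ 1/2)]
    apply Integrable.mono' hGint.1
    · exact ((measurable_id.mul (measurable_id.sub measurable_const)).abs.mul hg).aestronglyMeasurable
    · rw [ae_restrict_iff' measurableSet_Ioc]
      refine ae_of_all _ fun t ht => ?_
      have hgt : 0 ≤ g t := hg0 t ⟨ht.1, lt_of_le_of_lt ht.2 (by norm_num)⟩
      rw [Real.norm_eq_abs, abs_of_nonneg (mul_nonneg (abs_nonneg _) hgt)]
      exact hbound t ⟨le_of_lt ht.1, ht.2⟩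
  have hmono := intervalIntegral.integral_mono_on (by norm_num : (0:ℝ) ≤ 1/2) hFint hGint hbound
  have hderiv : ∀ t ∈ uIcc (0:ℝ) (1/2), HasDerivAt H (G t) t := by
    intro t ht
    rw [uIcc_of_le (by norm_num : (0:ℝ) ≤ 1/2)] at ht
    have h1t : (1:ℝ) - t ≠ 0 := by intro h; nlinarith [ht.2]
    have hlog : HasDerivAt (fun t => Real.log (1 - t)) ((1 - t)⁻¹ * (-1)) t :=
      (Real.hasDerivAt_log h1t).comp t ((hasDerivAt_id t).const_sub 1)
    have hH : HasDerivAt H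
        (A * (lam * 1 - (2 * t ^ 1) / 2)
          + B * ((2 * t ^ 1) / 2 + (1 - lam) * 1 + (1 - lam) * ((1 - t)⁻¹ * (-1)))) t := by
      apply HasDerivAt.add
      · exact (((hasDerivAt_id t).const_mul lam).sub ((hasDerivAt_pow 2 t).div_const 2)).const_mul A
      · exact ((((hasDerivAt_pow 2 t).div_const 2).add ((hasDerivAt_id t).const_mul (1-lam))).add
          (hlog.const_mul (1-lam))).const_mul B
    convert hH using 1
    simp only [hGdef, pow_one, mul_one, div_eq_mul_inv]
    ring
  have hint : (∫ t in (0:ℝ)..(1/2), G t) = H (1/2) - H 0 :=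
    intervalIntegral.integral_eq_sub_of_hasDerivAt hderiv hGint
  have hval : H (1/2) - H 0 = ((4 * lam - 1) / 8) * A
      + ((5 - 4 * lam) / 8 - (lam - 1) * Real.log (1 / 2)) * B := by
    simp only [hHdef]
    norm_num [Real.log_one]
    ring
  calc (∫ t in (0:ℝ)..(1/2), |t * (t - lam)| * g t) ≤ ∫ t in (0:ℝ)..(1/2), G t := hmono
    _ = H (1/2) - H 0 := hint
    _ = _ := hval
end

section
/- Let 1/2 ≤ λ ≤ 1 and suppose g : (0,1) → ℝ is nonnegative, measurable, and satisfies g(t) ≤ A/t + B/(1−t) for all t ∈ (0,1), where A, B ≥ 0 are constants. Then ∫_{1/2}^{1} |(1−t)·(1−λ−t)|·g(t) dt ≤ [(5−4λ)/8 − (λ−1)·ln(1/2)]·A + ((4λ−1)/8)·B. -/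
open MeasureTheory Set Real

theorem kernel_integral_bound_right_second_case
    (lam : ℝ) (hlam0 : 1 / 2 ≤ lam) (hlam1 : lam ≤ 1)
    (g : ℝ → ℝ) (hg : Measurable g) (hg0 : ∀ t ∈ Ioo (0 : ℝ) 1, 0 ≤ g t)
    (A B : ℝ) (hA : 0 ≤ A) (hB : 0 ≤ B)
    (hgb : ∀ t ∈ Ioo (0 : ℝ) 1, g t ≤ A / t + B / (1 - t)) :
    (∫ t in (1 / 2 : ℝ)..1, |(1 - t) * (1 - lam - t)| * g t)
      ≤ ((5 - 4 * lam) / 8 - (lam - 1) * Real.log (1 / 2)) * A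
        + ((4 * lam - 1) / 8) * B := by
  have h12 : (1 / 2 : ℝ) ≤ 1 := by norm_num
  set F : ℝ → ℝ := fun t => |(1 - t) * (1 - lam - t)| * g t with hF
  set f : ℝ → ℝ := fun t => A * ((1 - t) * (t + lam - 1) / t) + B * (t + lam - 1) with hf
  -- continuity of f on [1/2, 1]
  have hfc : ContinuousOn f (Icc (1 / 2 : ℝ) 1) := by
    apply ContinuousOn.add
    · apply ContinuousOn.mul continuousOn_const
      apply ContinuousOn.div (by fun_prop) continuousOn_id
      intro x hx
      have hx1 : (1 / 2 : ℝ) ≤ x := hx.1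
      simp only [id]
      intro h; rw [h] at hx1; norm_num at hx1
    · fun_prop
  have hfint : IntegrableOn f (Ioo (1 / 2 : ℝ) 1) :=
    (hfc.integrableOn_Icc).mono_set Ioo_subset_Icc_self
  -- pointwise bound F ≤ f on Ioo (1/2) 1
  have hle : ∀ t ∈ Ioo (1 / 2 : ℝ) 1, F t ≤ f t := by
    intro t ht
    have ht1 : (1 / 2 : ℝ) < t := ht.1
    have ht2 : t < 1 := ht.2
    have ht0 : (0 : ℝ) < t := by linarith
    have htm : t ∈ Ioo (0 : ℝ) 1 := ⟨ht0, ht2⟩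
    have habs : |(1 - t) * (1 - lam - t)| = (1 - t) * (t + lam - 1) := by
      rw [abs_of_nonpos (by nlinarith)]; ring
    have hnn : 0 ≤ (1 - t) * (t + lam - 1) := by nlinarith
    have hgle := hgb t htm
    calc F t = (1 - t) * (t + lam - 1) * g t := by rw [hF]; simp only; rw [habs]
      _ ≤ (1 - t) * (t + lam - 1) * (A / t + B / (1 - t)) :=
          mul_le_mul_of_nonneg_left hgle hnn
      _ = f t := by
          rw [hf]; simp only
          have ht0' : t ≠ 0 := ne_of_gt ht0
          have ht1' : (1 : ℝ) - t ≠ 0 := by intro h; apply absurd ht2; linarith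
          field_simp
  -- integrability of F
  have hFmeas : Measurable F := by
    apply Measurable.mul _ hg
    exact (measurable_const.sub measurable_id).mul
      ((measurable_const.sub measurable_id)) |>.abs
  have hFint : IntegrableOn F (Ioo (1 / 2 : ℝ) 1) := by
    apply Integrable.mono' hfint hFmeas.aestronglyMeasurable.restrict
    filter_upwards [ae_restrict_mem measurableSet_Ioo] with t ht
    have hg0' : 0 ≤ g t := hg0 t ⟨by linarith [ht.1], ht.2⟩
    have : 0 ≤ F t := mul_nonneg (abs_nonneg _) hg0'
    rw [Real.norm_eq_abs, abs_of_nonneg this]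
    exact hle t ht
  -- reduce to comparison of set integrals
  have step1 : (∫ t in (1 / 2 : ℝ)..1, F t) ≤ ∫ t in (1 / 2 : ℝ)..1, f t := by
    rw [intervalIntegral.integral_of_le h12, intervalIntegral.integral_of_le h12,
      integral_Ioc_eq_integral_Ioo, integral_Ioc_eq_integral_Ioo]
    exact setIntegral_mono_on hFint hfint measurableSet_Ioo hle
  -- compute ∫ f via FTC
  set G : ℝ → ℝ := fun x =>
    A * (-x ^ 2 / 2 + (2 - lam) * x + (lam - 1) * Real.log x)
      + B * (x ^ 2 / 2 + (lam - 1) * x) with hG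
  have hderiv : ∀ t ∈ uIcc (1 / 2 : ℝ) 1, HasDerivAt G (f t) t := by
    intro t ht
    rw [uIcc_of_le h12] at ht
    have ht0 : t ≠ 0 := by
      have : (1 / 2 : ℝ) ≤ t := ht.1
      intro h; rw [h] at this; norm_num at this
    have hp : HasDerivAt (fun x : ℝ => x ^ 2) (2 * t) t := by
      simpa using hasDerivAt_pow 2 t
    have hA1 : HasDerivAt (fun x : ℝ => -x ^ 2 / 2) (-(2 * t) / 2) t := hp.neg.div_const 2
    have hA2 : HasDerivAt (fun x : ℝ => (2 - lam) * x) ((2 - lam) * 1) t :=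
      (hasDerivAt_id t).const_mul (2 - lam)
    have hA3 : HasDerivAt (fun x : ℝ => (lam - 1) * Real.log x) ((lam - 1) * t⁻¹) t :=
      (Real.hasDerivAt_log ht0).const_mul (lam - 1)
    have hB1 : HasDerivAt (fun x : ℝ => x ^ 2 / 2) (2 * t / 2) t := hp.div_const 2
    have hB2 : HasDerivAt (fun x : ℝ => (lam - 1) * x) ((lam - 1) * 1) t :=
      (hasDerivAt_id t).const_mul (lam - 1)
    have hD := (((hA1.add hA2).add hA3).const_mul A).add ((hB1.add hB2).const_mul B)
    refine hD.congr_deriv ?_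
    rw [hf]; simp only
    field_simp
    ring
  have hfi : IntervalIntegrable f volume (1 / 2 : ℝ) 1 := by
    apply ContinuousOn.intervalIntegrable
    rwa [uIcc_of_le h12]
  have step2 : (∫ t in (1 / 2 : ℝ)..1, f t) = G 1 - G (1 / 2) :=
    intervalIntegral.integral_eq_sub_of_hasDerivAt hderiv hfi
  have step3 : G 1 - G (1 / 2)
      = ((5 - 4 * lam) / 8 - (lam - 1) * Real.log (1 / 2)) * A
        + ((4 * lam - 1) / 8) * B := by
    rw [hG]; simp only [Real.log_one]
    ring
  calc (∫ t in (1 / 2 : ℝ)..1, F t) ≤ ∫ t in (1 / 2 : ℝ)..1, f t := step1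
    _ = _ := by rw [step2, step3]
end
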